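/- arXiv:1602.01303 — 3 statements merged into one kernel-verified Lean document; each statement's English description precedes it below -/
import Mathlib

section
/- For nonzero polynomials P and Q over a complete discrete valuation field K, the Newton polygon of the product PQ equals the Minkowski sum of the Newton polygons of P and Q; equivalently, NF(PQ)(x) = inf over x₁ + x₂ = x of NF(P)(x₁) + NF(Q)(x₂) (the infimal convolution of NF(P) and NF(Q)). -/
open Polynomial Set

noncomputable section

variable {K : Type*} [Field K]

/-- Map `WithTop ℤ` into `EReal`. -/
def toE : WithTop ℤ → EReal := WithTop.recTopCoe ⊤ (fun n => ((n : ℝ) : EReal))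

/-- Newton function of a polynomial: the largest convex function lying below the
points `(i, val aᵢ)`, realized as the sup of affine minorants. -/
def NF (v : AddValuation K (WithTop ℤ)) (P : K[X]) (x : ℝ) : EReal :=
  sSup {y : EReal | ∃ a b : ℝ,
    (∀ i : ℕ, i ≤ P.natDegree → ((a * (i : ℝ) + b : ℝ) : EReal) ≤ toE (v (P.coeff i))) ∧
    y = ((a * x + b : ℝ) : EReal)}

/-- The invariant `b_φ(Q) = min_{0 ≤ x ≤ deg Q} (NF(Q)(x) − φ(x))`. -/
def bE (v : AddValuation K (WithTop ℤ)) (φ : ℝ → EReal) (Q : K[X]) : EReal :=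
  sInf {y : EReal | ∃ x : ℝ, 0 ≤ x ∧ x ≤ (Q.natDegree : ℝ) ∧ y = NF v Q x - φ x}


section NPauxSection
open Finset
namespace NPaux

variable (p : ℕ → ℝ)
def mins (A : Finset ℕ) (a : ℝ) : Finset ℕ :=
  A.filter (fun i => ∀ j ∈ A, p i - a * i ≤ p j - a * j)
variable {A : Finset ℕ}
lemma mins_nonempty (hA : A.Nonempty) (a : ℝ) : (mins p A a).Nonempty := by
  obtain ⟨i, hi, hmin⟩ := A.exists_min_image (fun i => p i - a * i) hA
  exact ⟨i, Finset.mem_filter.mpr ⟨hi, hmin⟩⟩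
lemma mins_subset (a : ℝ) : mins p A a ⊆ A := Finset.filter_subset _ _
def iLo (hA : A.Nonempty) (a : ℝ) : ℕ := (mins p A a).min' (mins_nonempty p hA a)
def iHi (hA : A.Nonempty) (a : ℝ) : ℕ := (mins p A a).max' (mins_nonempty p hA a)
def gv (hA : A.Nonempty) (a : ℝ) : ℝ := p (iLo p hA a) - a * (iLo p hA a)
lemma iLo_mem (hA : A.Nonempty) (a : ℝ) : iLo p hA a ∈ mins p A a := Finset.min'_mem _ _
lemma iHi_mem (hA : A.Nonempty) (a : ℝ) : iHi p hA a ∈ mins p A a := Finset.max'_mem _ _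
lemma iLo_le_iHi (hA : A.Nonempty) (a : ℝ) : iLo p hA a ≤ iHi p hA a :=
  Finset.min'_le _ _ (iHi_mem p hA a)
lemma gv_le (hA : A.Nonempty) (a : ℝ) {i : ℕ} (hi : i ∈ A) :
    gv p hA a ≤ p i - a * i := (Finset.mem_filter.mp (iLo_mem p hA a)).2 i hi
lemma eq_gv_of_mem (hA : A.Nonempty) (a : ℝ) {i : ℕ} (hi : i ∈ mins p A a) :
    p i - a * i = gv p hA a := by
  have h1 := (Finset.mem_filter.mp hi).2 _ (mins_subset p a (iLo_mem p hA a))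
  exact le_antisymm h1 (gv_le p hA a (mins_subset p a hi))
lemma gv_lt_of_not_mem (hA : A.Nonempty) (a : ℝ) {i : ℕ} (hi : i ∈ A)
    (h : i ∉ mins p A a) : gv p hA a < p i - a * i := by
  rcases lt_or_eq_of_le (gv_le p hA a hi) with h' | h'
  · exact h'
  · exact absurd (Finset.mem_filter.mpr ⟨hi, fun j hj => h' ▸ gv_le p hA a hj⟩) h
lemma mins_mono {q : ℕ → ℝ} {B : Finset ℕ} {a a' : ℝ} (hlt : a < a')
    {i i' : ℕ} (hi : i ∈ mins q B a) (hi' : i' ∈ mins q B a') : i ≤ i' := by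
  have h1 := (Finset.mem_filter.mp hi).2 _ (mins_subset q a' hi')
  have h2 := (Finset.mem_filter.mp hi').2 _ (mins_subset q a hi)
  by_contra hc
  push_neg at hc
  have : (i' : ℝ) < i := by exact_mod_cast hc
  nlinarith

lemma exists_gap (hA : A.Nonempty) (a : ℝ) :
    ∃ D > (0:ℝ), ∀ i ∈ A, i ∉ mins p A a → gv p hA a + D ≤ p i - a * i := by
  by_cases hs : (A \ mins p A a).Nonempty
  · refine ⟨(A \ mins p A a).inf' hs (fun i => p i - a * i - gv p hA a), ?_, ?_⟩
    · rw [gt_iff_lt, Finset.lt_inf'_iff]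
      intro i hi
      rw [Finset.mem_sdiff] at hi
      have := gv_lt_of_not_mem p hA a hi.1 hi.2
      linarith
    · intro i hiA hi
      have hmem : i ∈ A \ mins p A a := Finset.mem_sdiff.mpr ⟨hiA, hi⟩
      have := Finset.inf'_le (fun i => p i - a * i - gv p hA a) hmem
      linarith
  · refine ⟨1, one_pos, fun i hiA hi => absurd ⟨i, Finset.mem_sdiff.mpr ⟨hiA, hi⟩⟩ hs⟩

/-- stability of argmins under small perturbation of the slope. -/
lemma exists_stable (hA : A.Nonempty) (a : ℝ) :
    ∃ ε > (0:ℝ), ∀ δ : ℝ, 0 < δ → δ ≤ ε →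
      mins p A (a + δ) = {iHi p hA a} ∧ mins p A (a - δ) = {iLo p hA a} := by
  obtain ⟨D, hD, hgap⟩ := exists_gap p hA a
  obtain ⟨N, hN0, hcast⟩ : ∃ N : ℝ, 0 < N ∧ ∀ i ∈ A, (i:ℝ) ≤ N := by
    refine ⟨(A.max' hA : ℝ) + 1, by positivity, fun i hi => ?_⟩
    have h := Finset.le_max' A i hi
    have : (i:ℝ) ≤ (A.max' hA : ℝ) := by exact_mod_cast h
    linarith
  refine ⟨D / (2*N), by positivity, fun δ hδ hδε => ?_⟩
  have hδN : δ * N < D := by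
    have h1 : δ * N ≤ (D / (2*N)) * N :=
      mul_le_mul_of_nonneg_right hδε (le_of_lt hN0)
    have h2 : (D / (2*N)) * N = D/2 := by field_simp
    rw [h2] at h1
    linarith
  constructor
  · ext i
    simp only [mins, Finset.mem_filter, Finset.mem_singleton]
    constructor
    · rintro ⟨hiA, hmin⟩
      have hHi := hmin _ (mins_subset p a (iHi_mem p hA a))
      have hHiv : p (iHi p hA a) - a * (iHi p hA a) = gv p hA a :=
        eq_gv_of_mem p hA a (iHi_mem p hA a)
      by_cases him : i ∈ mins p A a
      · have hiv : p i - a * i = gv p hA a := eq_gv_of_mem p hA a him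
        have hle : (iHi p hA a : ℝ) ≤ i := by nlinarith
        have h2 : i ≤ iHi p hA a := Finset.le_max' _ i him
        have : iHi p hA a ≤ i := by exact_mod_cast hle
        omega
      · exfalso
        have h1 := hgap i hiA him
        have h2 : (i:ℝ) ≤ N := hcast i hiA
        have h3 : (0:ℝ) ≤ (iHi p hA a : ℝ) := Nat.cast_nonneg _
        nlinarith
    · rintro rfl
      refine ⟨mins_subset p a (iHi_mem p hA a), fun j hj => ?_⟩
      have hHiv : p (iHi p hA a) - a * (iHi p hA a) = gv p hA a :=
        eq_gv_of_mem p hA a (iHi_mem p hA a)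
      by_cases hjm : j ∈ mins p A a
      · have hjv : p j - a * j = gv p hA a := eq_gv_of_mem p hA a hjm
        have : (j:ℝ) ≤ (iHi p hA a : ℝ) := by exact_mod_cast Finset.le_max' _ j hjm
        nlinarith
      · have h1 := hgap j hj hjm
        have h2 : (j:ℝ) ≤ N := hcast j hj
        have h3 : (0:ℝ) ≤ (iHi p hA a : ℝ) := Nat.cast_nonneg _
        nlinarith
  · ext i
    simp only [mins, Finset.mem_filter, Finset.mem_singleton]
    constructor
    · rintro ⟨hiA, hmin⟩
      have hLo := hmin _ (mins_subset p a (iLo_mem p hA a))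
      have hLov : p (iLo p hA a) - a * (iLo p hA a) = gv p hA a :=
        eq_gv_of_mem p hA a (iLo_mem p hA a)
      by_cases him : i ∈ mins p A a
      · have hiv : p i - a * i = gv p hA a := eq_gv_of_mem p hA a him
        have hle : (i : ℝ) ≤ iLo p hA a := by nlinarith
        have h2 : iLo p hA a ≤ i := Finset.min'_le _ i him
        have : i ≤ iLo p hA a := by exact_mod_cast hle
        omega
      · exfalso
        have h1 := hgap i hiA him
        have h2 : (iLo p hA a : ℝ) ≤ N := hcast _ (mins_subset p a (iLo_mem p hA a))
        have h3 : (0:ℝ) ≤ (i : ℝ) := Nat.cast_nonneg _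
        nlinarith
    · rintro rfl
      refine ⟨mins_subset p a (iLo_mem p hA a), fun j hj => ?_⟩
      have hLov : p (iLo p hA a) - a * (iLo p hA a) = gv p hA a :=
        eq_gv_of_mem p hA a (iLo_mem p hA a)
      by_cases hjm : j ∈ mins p A a
      · have hjv : p j - a * j = gv p hA a := eq_gv_of_mem p hA a hjm
        have : (iLo p hA a : ℝ) ≤ (j:ℝ) := by exact_mod_cast Finset.min'_le _ j hjm
        nlinarith
      · have h1 := hgap j hj hjm
        have h2 : (iLo p hA a : ℝ) ≤ N := hcast _ (mins_subset p a (iLo_mem p hA a))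
        have h3 : (0:ℝ) ≤ (j : ℝ) := Nat.cast_nonneg _
        nlinarith

/-- for very large slopes the argmin is the largest index; for very negative the smallest. -/
lemma exists_far (hA : A.Nonempty) :
    ∃ M : ℝ, ∀ a : ℝ, (M ≤ a → mins p A a = {A.max' hA}) ∧
      (a ≤ -M → mins p A a = {A.min' hA}) := by
  obtain ⟨M, hM1, hM⟩ : ∃ M : ℝ, 1 ≤ M ∧ ∀ i ∈ A,
      |p (A.max' hA) - p i| ≤ M - 1 ∧ |p (A.min' hA) - p i| ≤ M - 1 := by
    refine ⟨1 + A.sup' hA (fun i => |p (A.max' hA) - p i| + |p (A.min' hA) - p i|), ?_, ?_⟩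
    · have : (0:ℝ) ≤ A.sup' hA (fun i => |p (A.max' hA) - p i| + |p (A.min' hA) - p i|) := by
        rw [Finset.le_sup'_iff]
        exact ⟨A.max' hA, A.max'_mem hA, by positivity⟩
      linarith
    · intro i hi
      have h := Finset.le_sup' (fun i => |p (A.max' hA) - p i| + |p (A.min' hA) - p i|) hi
      constructor
      · have := abs_nonneg (p (A.min' hA) - p i); linarith
      · have := abs_nonneg (p (A.max' hA) - p i); linarith
  refine ⟨M, fun a => ⟨fun ha => ?_, fun ha => ?_⟩⟩
  · ext i
    simp only [mins, Finset.mem_filter, Finset.mem_singleton]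
    constructor
    · rintro ⟨hiA, hmin⟩
      by_contra hne
      have hlt : i < A.max' hA := lt_of_le_of_ne (Finset.le_max' A i hiA) hne
      have hcast : (i:ℝ) + 1 ≤ (A.max' hA : ℝ) := by exact_mod_cast hlt
      have h1 := hmin _ (A.max'_mem hA)
      have h2 := (abs_le.mp (hM i hiA).1).2
      nlinarith
    · rintro rfl
      refine ⟨A.max'_mem hA, fun j hj => ?_⟩
      rcases eq_or_lt_of_le (Finset.le_max' A j hj) with heq | hlt
      · rw [heq]
      · have hcast : (j:ℝ) + 1 ≤ (A.max' hA : ℝ) := by exact_mod_cast hlt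
        have h2 := (abs_le.mp (hM j hj).1).2
        nlinarith
  · ext i
    simp only [mins, Finset.mem_filter, Finset.mem_singleton]
    constructor
    · rintro ⟨hiA, hmin⟩
      by_contra hne
      have hlt : A.min' hA < i := lt_of_le_of_ne (Finset.min'_le A i hiA) (Ne.symm hne)
      have hcast : (A.min' hA : ℝ) + 1 ≤ (i : ℝ) := by exact_mod_cast hlt
      have h1 := hmin _ (A.min'_mem hA)
      have h2 := (abs_le.mp (hM i hiA).2).2
      nlinarith
    · rintro rfl
      refine ⟨A.min'_mem hA, fun j hj => ?_⟩
      rcases eq_or_lt_of_le (Finset.min'_le A j hj) with heq | hlt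
      · rw [← heq]
      · have hcast : (A.min' hA : ℝ) + 1 ≤ (j : ℝ) := by exact_mod_cast hlt
        have h2 := (abs_le.mp (hM j hj).2).2
        nlinarith

lemma iHi_of_mins_eq {a : ℝ} {k : ℕ} (hA : A.Nonempty) (h : mins p A a = {k}) :
    iHi p hA a = k := by
  have := iHi_mem p hA a
  rw [h, Finset.mem_singleton] at this
  exact this

lemma iLo_of_mins_eq {a : ℝ} {k : ℕ} (hA : A.Nonempty) (h : mins p A a = {k}) :
    iLo p hA a = k := by
  have := iLo_mem p hA a
  rw [h, Finset.mem_singleton] at this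
  exact this

/-- The covering lemma: every admissible `x` is covered by the argmin-sum interval
of some slope. -/
lemma covering (q : ℕ → ℝ) {B : Finset ℕ} (hA : A.Nonempty) (hB : B.Nonempty)
    (x : ℝ) (hx1 : ((A.min' hA : ℝ) + (B.min' hB : ℝ)) ≤ x)
    (hx2 : x ≤ ((A.max' hA : ℝ) + (B.max' hB : ℝ))) :
    ∃ a : ℝ, ((iLo p hA a : ℝ) + (iLo q hB a : ℝ) ≤ x) ∧
      (x ≤ (iHi p hA a : ℝ) + (iHi q hB a : ℝ)) := by
  obtain ⟨MA, hMA⟩ := exists_far p hA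
  obtain ⟨MB, hMB⟩ := exists_far q hB
  set T : Set ℝ := {a : ℝ | x ≤ (iHi p hA a : ℝ) + (iHi q hB a : ℝ)} with hT
  have hiHi_mono : ∀ a a' : ℝ, a ≤ a' → iHi p hA a ≤ iHi p hA a' := by
    intro a a' h
    rcases eq_or_lt_of_le h with rfl | hlt
    · exact le_refl _
    · exact le_trans (mins_mono hlt (iHi_mem p hA a) (iLo_mem p hA a'))
        (iLo_le_iHi p hA a')
  have hiHi_monoB : ∀ a a' : ℝ, a ≤ a' → iHi q hB a ≤ iHi q hB a' := by
    intro a a' h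
    rcases eq_or_lt_of_le h with rfl | hlt
    · exact le_refl _
    · exact le_trans (mins_mono hlt (iHi_mem q hB a) (iLo_mem q hB a'))
        (iLo_le_iHi q hB a')
  have hTmax : max MA MB ∈ T := by
    have h1 : iHi p hA (max MA MB) = A.max' hA :=
      iHi_of_mins_eq p hA ((hMA _).1 (le_max_left _ _))
    have h2 : iHi q hB (max MA MB) = B.max' hB :=
      iHi_of_mins_eq q hB ((hMB _).1 (le_max_right _ _))
    simp only [hT, Set.mem_setOf_eq, h1, h2]
    exact hx2
  by_cases hbdd : BddBelow T
  · set a₀ : ℝ := sInf T with ha₀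
    have hTne : T.Nonempty := ⟨_, hTmax⟩
    -- right part at a₀
    obtain ⟨εA, hεA, hstA⟩ := exists_stable p hA a₀
    obtain ⟨εB, hεB, hstB⟩ := exists_stable q hB a₀
    have hright : x ≤ (iHi p hA a₀ : ℝ) + (iHi q hB a₀ : ℝ) := by
      have hlt : sInf T < a₀ + min εA εB := by
        rw [← ha₀]; have : 0 < min εA εB := lt_min hεA hεB; linarith
      obtain ⟨a, haT, halt⟩ := exists_lt_of_csInf_lt hTne hlt
      rcases le_or_gt a a₀ with hle | hgt
      · have : a = a₀ := le_antisymm hle (csInf_le hbdd haT)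
        rw [← this]; exact haT
      · set δ := a - a₀ with hδdef
        have hδ0 : 0 < δ := by simp only [hδdef]; linarith
        have hδA : δ ≤ εA := by simp only [hδdef]; have := min_le_left εA εB; linarith
        have hδB : δ ≤ εB := by simp only [hδdef]; have := min_le_right εA εB; linarith
        have heqA : iHi p hA a = iHi p hA a₀ := by
          have h := (hstA δ hδ0 hδA).1
          have : a = a₀ + δ := by simp [hδdef]
          rw [this]
          exact iHi_of_mins_eq p hA h
        have heqB : iHi q hB a = iHi q hB a₀ := by
          have h := (hstB δ hδ0 hδB).1
          have : a = a₀ + δ := by simp [hδdef]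
          rw [this]
          exact iHi_of_mins_eq q hB h
        have := haT
        simp only [hT, Set.mem_setOf_eq] at this
        rw [heqA, heqB] at this
        exact this
    have hleft : (iLo p hA a₀ : ℝ) + (iLo q hB a₀ : ℝ) ≤ x := by
      set ε := min εA εB with hε
      have hε0 : 0 < ε := lt_min hεA hεB
      have hnotT : a₀ - ε ∉ T := by
        intro hmem
        have := csInf_le hbdd hmem
        rw [← ha₀] at this
        linarith
      have heqA : iHi p hA (a₀ - ε) = iLo p hA a₀ :=
        iHi_of_mins_eq p hA (hstA ε hε0 (min_le_left _ _)).2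
      have heqB : iHi q hB (a₀ - ε) = iLo q hB a₀ :=
        iHi_of_mins_eq q hB (hstB ε hε0 (min_le_right _ _)).2
      simp only [hT, Set.mem_setOf_eq, heqA, heqB] at hnotT
      linarith [not_le.mp hnotT]
    exact ⟨a₀, hleft, hright⟩
  · -- T not bounded below: pick a very negative element of T
    rw [not_bddBelow_iff] at hbdd
    obtain ⟨a, haT, halt⟩ := hbdd (-(max MA MB))
    have haA : a ≤ -MA := by have := le_max_left MA MB; linarith
    have haB : a ≤ -MB := by have := le_max_right MA MB; linarith
    have h1 : iLo p hA a = A.min' hA := iLo_of_mins_eq p hA ((hMA _).2 haA)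
    have h2 : iLo q hB a = B.min' hB := iLo_of_mins_eq q hB ((hMB _).2 haB)
    refine ⟨a, ?_, haT⟩
    rw [h1, h2]
    exact hx1



@[simp] lemma toE_top : toE (⊤ : WithTop ℤ) = ⊤ := rfl
@[simp] lemma toE_coe (z : ℤ) : toE (z : WithTop ℤ) = ((z : ℝ) : EReal) := rfl

variable (v : AddValuation K (WithTop ℤ))

lemma v_ne_top {x : K} (hx : x ≠ 0) : v x ≠ ⊤ := by
  intro ht
  have h1 : v (x * x⁻¹) = v x + v x⁻¹ := v.map_mul x x⁻¹
  rw [mul_inv_cancel₀ hx, v.map_one, ht, top_add] at h1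
  simp at h1

/-- the (real-valued) valuations of the coefficients. -/
def pf (P : K[X]) : ℕ → ℝ := fun i => ((WithTop.untopD 0 (v (P.coeff i)) : ℤ) : ℝ)

lemma exists_int {P : K[X]} {i : ℕ} (hi : P.coeff i ≠ 0) :
    ∃ z : ℤ, v (P.coeff i) = (z : WithTop ℤ) ∧ pf v P i = (z : ℝ) := by
  obtain ⟨z, hz⟩ := WithTop.ne_top_iff_exists.mp (v_ne_top v hi)
  exact ⟨z, hz.symm, by simp [pf, ← hz]⟩

lemma toE_v_coeff {P : K[X]} {i : ℕ} (hi : i ∈ P.support) :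
    toE (v (P.coeff i)) = ((pf v P i : ℝ) : EReal) := by
  obtain ⟨z, hz1, hz2⟩ := exists_int v (Polynomial.mem_support_iff.mp hi)
  rw [hz1, hz2, toE_coe]

/-- reformulation of `NF` in terms of the support only. -/
lemma NF_eq (P : K[X]) (x : ℝ) :
    NF v P x = sSup {y : EReal | ∃ a b : ℝ,
      (∀ i ∈ P.support, a * (i:ℝ) + b ≤ pf v P i) ∧ y = ((a * x + b : ℝ) : EReal)} := by
  unfold NF
  congr 1
  ext y
  constructor
  · rintro ⟨a, b, hab, rfl⟩
    refine ⟨a, b, fun i hi => ?_, rfl⟩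
    have h := hab i (Polynomial.le_natDegree_of_mem_supp i hi)
    rw [toE_v_coeff v hi] at h
    exact_mod_cast h
  · rintro ⟨a, b, hab, rfl⟩
    refine ⟨a, b, fun i hile => ?_, rfl⟩
    by_cases hi : i ∈ P.support
    · rw [toE_v_coeff v hi]
      exact_mod_cast hab i hi
    · rw [Polynomial.notMem_support_iff.mp hi |> congrArg v |>.trans v.map_zero |> congrArg toE]
      exact le_top

lemma le_NF {P : K[X]} (hP : P ≠ 0) (a x : ℝ) :
    ((a * x + gv (pf v P) (nonempty_support_iff.mpr hP) a : ℝ) : EReal) ≤ NF v P x := by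
  rw [NF_eq]
  apply le_sSup
  refine ⟨a, _, fun i hi => ?_, rfl⟩
  have := gv_le (pf v P) (nonempty_support_iff.mpr hP) a hi
  linarith

lemma NF_le_of_between {P : K[X]} (hP : P ≠ 0) (a x₁ : ℝ)
    (h1 : (iLo (pf v P) (nonempty_support_iff.mpr hP) a : ℝ) ≤ x₁)
    (h2 : x₁ ≤ (iHi (pf v P) (nonempty_support_iff.mpr hP) a : ℝ)) :
    NF v P x₁ ≤ ((a * x₁ + gv (pf v P) (nonempty_support_iff.mpr hP) a : ℝ) : EReal) := by
  set hA := nonempty_support_iff.mpr hP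
  set p := pf v P
  rw [NF_eq]
  apply sSup_le
  rintro y ⟨a', b', hab, rfl⟩
  rw [EReal.coe_le_coe_iff]
  have hLo := hab _ (mins_subset p a (iLo_mem p hA a))
  have hHi := hab _ (mins_subset p a (iHi_mem p hA a))
  have hLov : p (iLo p hA a) - a * (iLo p hA a) = gv p hA a :=
    eq_gv_of_mem p hA a (iLo_mem p hA a)
  have hHiv : p (iHi p hA a) - a * (iHi p hA a) = gv p hA a :=
    eq_gv_of_mem p hA a (iHi_mem p hA a)
  rcases le_or_gt a' a with hle | hgt
  · nlinarith
  · nlinarith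

lemma real_le_NF {P : K[X]} (hP : P ≠ 0) (x : ℝ) :
    ∃ c : ℝ, ((c:ℝ) : EReal) ≤ NF v P x :=
  ⟨_, le_NF v hP 0 x⟩

lemma NF_ne_bot {P : K[X]} (hP : P ≠ 0) (x : ℝ) : NF v P x ≠ ⊥ := by
  obtain ⟨c, hc⟩ := real_le_NF v hP x
  intro h
  rw [h, le_bot_iff] at hc
  exact EReal.coe_ne_bot _ hc

/-- For `x` to the left of the trailing degree, `NF = ⊤`. -/
lemma NF_eq_top {P : K[X]} (hP : P ≠ 0) (x : ℝ)
    (hx : x < (P.natTrailingDegree : ℝ)) : NF v P x = ⊤ := by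
  set hA := nonempty_support_iff.mpr hP
  set p := pf v P
  set m : ℕ := P.support.min' hA with hm
  have hmeq : (P.natTrailingDegree : ℝ) = (m : ℝ) := by
    rw [Polynomial.natTrailingDegree_eq_support_min' hP]
  rw [hmeq] at hx
  obtain ⟨M, hM⟩ := exists_far p hA
  rw [NF_eq, sSup_eq_top]
  intro b hb
  induction b using EReal.rec with
  | bot =>
      exact ⟨_, ⟨0, gv p hA 0, fun i hi => by linarith [gv_le p hA 0 hi], rfl⟩, bot_lt_iff_ne_bot.mpr (EReal.coe_ne_bot _)⟩
  | coe c =>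
      set a : ℝ := min (-M) ((c + 1 - p m) / (x - (m:ℝ))) with ha
      have haM : a ≤ -M := min_le_left _ _
      have hmins : mins p P.support a = {m} := (hM a).2 haM
      have hgv : gv p hA a = p m - a * m := by
        rw [← eq_gv_of_mem p hA a (by rw [hmins]; exact Finset.mem_singleton_self m)]
      refine ⟨_, ⟨a, gv p hA a, fun i hi => by linarith [gv_le p hA a hi], rfl⟩, ?_⟩
      rw [EReal.coe_lt_coe_iff]
      have hxm : x - (m:ℝ) < 0 := by linarith
      have hq : a ≤ (c + 1 - p m) / (x - (m:ℝ)) := min_le_right _ _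
      have : (c + 1 - p m) ≤ a * (x - (m:ℝ)) := by
        rw [le_div_iff_of_neg hxm] at hq
        linarith [hq]
      rw [hgv]
      nlinarith
  | top => exact absurd hb (lt_irrefl _)


lemma v_sum_eq {ι : Type*} [DecidableEq ι] (s : Finset ι) (f : ι → K) {i₀ : ι} (hi₀ : i₀ ∈ s)
    (hne : v (f i₀) ≠ ⊤) (h : ∀ j ∈ s, j ≠ i₀ → v (f i₀) < v (f j)) :
    v (∑ i ∈ s, f i) = v (f i₀) := by
  rw [← Finset.add_sum_erase s f hi₀]
  exact v.map_add_eq_of_lt_left (v.map_lt_sum hne (fun i hi =>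
    h i (Finset.mem_of_mem_erase hi) (Finset.ne_of_mem_erase hi)))

/-- Gauss multiplicativity of the minimum. -/
lemma gv_mul {P Q : K[X]} (hP : P ≠ 0) (hQ : Q ≠ 0) (a : ℝ) :
    gv (pf v (P * Q)) (nonempty_support_iff.mpr (mul_ne_zero hP hQ)) a =
      gv (pf v P) (nonempty_support_iff.mpr hP) a +
      gv (pf v Q) (nonempty_support_iff.mpr hQ) a := by
  set hA := nonempty_support_iff.mpr hP
  set hB := nonempty_support_iff.mpr hQ
  set hC := nonempty_support_iff.mpr (mul_ne_zero hP hQ)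
  set p := pf v P
  set q := pf v Q
  set r := pf v (P * Q) with hr
  -- Part 1 : lower bound for every k in the support of P*Q
  have hall : ∀ k ∈ (P * Q).support,
      gv p hA a + gv q hB a ≤ r k - a * k := by
    intro k hk
    have hck : (P * Q).coeff k ≠ 0 := Polynomial.mem_support_iff.mp hk
    obtain ⟨zk, hzk, hzk2⟩ := exists_int v hck
    have hex : ∃ t ∈ Finset.HasAntidiagonal.antidiagonal k,
        v (P.coeff t.1 * Q.coeff t.2) ≤ v ((P * Q).coeff k) := by
      by_contra hcon
      push_neg at hcon
      have hlt := v.map_lt_sum (f := fun t : ℕ × ℕ => P.coeff t.1 * Q.coeff t.2)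
        (v_ne_top v hck) hcon
      rw [← Polynomial.coeff_mul] at hlt
      exact lt_irrefl _ hlt
    obtain ⟨⟨i, j⟩, hmem, hle⟩ := hex
    have hij : i + j = k := Finset.HasAntidiagonal.mem_antidiagonal.mp hmem
    have hvt : v (P.coeff i * Q.coeff j) ≠ ⊤ := by
      intro h
      rw [h, top_le_iff] at hle
      exact v_ne_top v hck hle
    have hPi : P.coeff i ≠ 0 := by
      intro h; exact hvt (by rw [h, zero_mul, v.map_zero])
    have hQj : Q.coeff j ≠ 0 := by
      intro h; exact hvt (by rw [h, mul_zero, v.map_zero])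
    obtain ⟨zi, hzi, hzi2⟩ := exists_int v hPi
    obtain ⟨zj, hzj, hzj2⟩ := exists_int v hQj
    have hsum : ((zi + zj : ℤ) : WithTop ℤ) ≤ (zk : WithTop ℤ) := by
      rw [← hzk]
      calc ((zi + zj : ℤ) : WithTop ℤ) = v (P.coeff i) + v (Q.coeff j) := by
            rw [hzi, hzj]; push_cast; rfl
        _ = v (P.coeff i * Q.coeff j) := (v.map_mul _ _).symm
        _ ≤ v ((P * Q).coeff k) := hle
    have hsumR : (zi : ℝ) + (zj : ℝ) ≤ (zk : ℝ) := by exact_mod_cast hsum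
    have h1 : gv p hA a ≤ p i - a * i :=
      gv_le p hA a (Polynomial.mem_support_iff.mpr hPi)
    have h2 : gv q hB a ≤ q j - a * j :=
      gv_le q hB a (Polynomial.mem_support_iff.mpr hQj)
    have hijR : (i : ℝ) + (j : ℝ) = (k : ℝ) := by exact_mod_cast hij
    have haij : a * (i:ℝ) + a * (j:ℝ) = a * (k:ℝ) := by rw [← hijR]; ring
    have hpi : p i = (zi:ℝ) := hzi2
    have hqj : q j = (zj:ℝ) := hzj2
    have hrk2 : r k = (zk:ℝ) := hzk2
    rw [hpi] at h1
    rw [hqj] at h2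
    rw [hrk2]
    linarith
  -- Part 2 : the bound is attained at i₀ + j₀
  set i₀ := iHi p hA a with hi₀def
  set j₀ := iHi q hB a with hj₀def
  have hi₀S : i₀ ∈ P.support := mins_subset p a (iHi_mem p hA a)
  have hj₀S : j₀ ∈ Q.support := mins_subset q a (iHi_mem q hB a)
  have hPi₀ : P.coeff i₀ ≠ 0 := Polynomial.mem_support_iff.mp hi₀S
  have hQj₀ : Q.coeff j₀ ≠ 0 := Polynomial.mem_support_iff.mp hj₀S
  obtain ⟨zi₀, hzi₀, hzi₀2⟩ := exists_int v hPi₀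
  obtain ⟨zj₀, hzj₀, hzj₀2⟩ := exists_int v hQj₀
  have hv₀ : v (P.coeff i₀ * Q.coeff j₀) = ((zi₀ + zj₀ : ℤ) : WithTop ℤ) := by
    rw [v.map_mul, hzi₀, hzj₀]; push_cast; rfl
  have hgv₀p : p i₀ - a * i₀ = gv p hA a := eq_gv_of_mem p hA a (iHi_mem p hA a)
  have hgv₀q : q j₀ - a * j₀ = gv q hB a := eq_gv_of_mem q hB a (iHi_mem q hB a)
  have hkey : ∀ t ∈ Finset.HasAntidiagonal.antidiagonal (i₀ + j₀), t ≠ (i₀, j₀) →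
      v (P.coeff i₀ * Q.coeff j₀) < v (P.coeff t.1 * Q.coeff t.2) := by
    rintro ⟨i, j⟩ hmem hne
    have hij : i + j = i₀ + j₀ := Finset.HasAntidiagonal.mem_antidiagonal.mp hmem
    by_cases hz : P.coeff i * Q.coeff j = 0
    · rw [hz, v.map_zero, hv₀]
      exact WithTop.coe_lt_top _
    · have hPi : P.coeff i ≠ 0 := fun h => hz (by rw [h, zero_mul])
      have hQj : Q.coeff j ≠ 0 := fun h => hz (by rw [h, mul_zero])
      obtain ⟨zi, hzi, hzi2⟩ := exists_int v hPi
      obtain ⟨zj, hzj, hzj2⟩ := exists_int v hQj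
      have hvt : v (P.coeff i * Q.coeff j) = ((zi + zj : ℤ) : WithTop ℤ) := by
        rw [v.map_mul, hzi, hzj]; push_cast; rfl
      rw [hv₀, hvt, WithTop.coe_lt_coe]
      have hiR : (i : ℝ) + (j : ℝ) = (i₀ : ℝ) + (j₀ : ℝ) := by exact_mod_cast hij
      have hreal : (zi₀ : ℝ) + (zj₀ : ℝ) < (zi : ℝ) + (zj : ℝ) := by
        have hine : i ≠ i₀ := by
          intro h
          apply hne
          subst h
          have : j = j₀ := by omega
          rw [this]
        rcases lt_or_gt_of_ne hine with hlt | hgt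
        · -- i < i₀ hence j > j₀, so j is not an argmin for q
          have hjgt : j₀ < j := by omega
          have hjnm : j ∉ mins q Q.support a := by
            intro hjm
            exact absurd (Finset.le_max' _ j hjm) (not_le.mpr hjgt)
          have h1 := gv_lt_of_not_mem q hB a (Polynomial.mem_support_iff.mpr hQj) hjnm
          have h2 := gv_le p hA a (Polynomial.mem_support_iff.mpr hPi)
          have haij : a * (i:ℝ) + a * (j:ℝ) = a * (i₀:ℝ) + a * (j₀:ℝ) := by
            linear_combination a * hiR
          have hpi : p i = (zi:ℝ) := hzi2
          have hqj : q j = (zj:ℝ) := hzj2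
          have hpi₀ : p i₀ = (zi₀:ℝ) := hzi₀2
          have hqj₀ : q j₀ = (zj₀:ℝ) := hzj₀2
          linarith [h1, h2, hgv₀p, hgv₀q]
        · have hinm : i ∉ mins p P.support a := by
            intro him
            exact absurd (Finset.le_max' _ i him) (not_le.mpr hgt)
          have h1 := gv_lt_of_not_mem p hA a (Polynomial.mem_support_iff.mpr hPi) hinm
          have h2 := gv_le q hB a (Polynomial.mem_support_iff.mpr hQj)
          have haij : a * (i:ℝ) + a * (j:ℝ) = a * (i₀:ℝ) + a * (j₀:ℝ) := by
            linear_combination a * hiR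
          have hpi : p i = (zi:ℝ) := hzi2
          have hqj : q j = (zj:ℝ) := hzj2
          have hpi₀ : p i₀ = (zi₀:ℝ) := hzi₀2
          have hqj₀ : q j₀ = (zj₀:ℝ) := hzj₀2
          linarith [h1, h2, hgv₀p, hgv₀q]
      exact_mod_cast hreal
  have hne₀ : v (P.coeff i₀ * Q.coeff j₀) ≠ ⊤ := by
    rw [hv₀]; exact WithTop.coe_ne_top
  have hsum0 : v (∑ t ∈ Finset.HasAntidiagonal.antidiagonal (i₀ + j₀), P.coeff t.1 * Q.coeff t.2) =
      v (P.coeff (i₀, j₀).1 * Q.coeff (i₀, j₀).2) :=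
    v_sum_eq v (Finset.HasAntidiagonal.antidiagonal (i₀ + j₀)) (fun t => P.coeff t.1 * Q.coeff t.2)
      (Finset.HasAntidiagonal.mem_antidiagonal.mpr rfl) hne₀ hkey
  have hvk : v ((P * Q).coeff (i₀ + j₀)) = ((zi₀ + zj₀ : ℤ) : WithTop ℤ) := by
    rw [Polynomial.coeff_mul, hsum0]
    exact hv₀
  have hck : (P * Q).coeff (i₀ + j₀) ≠ 0 := by
    intro h
    rw [h, v.map_zero] at hvk
    exact WithTop.coe_ne_top hvk.symm
  have hkS : (i₀ + j₀) ∈ (P * Q).support := Polynomial.mem_support_iff.mpr hck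
  have hrk : r (i₀ + j₀) = (zi₀ : ℝ) + (zj₀ : ℝ) := by
    obtain ⟨zk, hzk, hzk2⟩ := exists_int v hck
    have h0 : r (i₀ + j₀) = (zk:ℝ) := hzk2
    rw [hzk] at hvk
    have hzz : zk = zi₀ + zj₀ := by exact_mod_cast hvk
    rw [h0, hzz]; push_cast; ring
  -- combine
  apply le_antisymm
  · have h1 := gv_le r hC a hkS
    rw [hrk] at h1
    have hcast : ((i₀ + j₀ : ℕ) : ℝ) = (i₀ : ℝ) + (j₀ : ℝ) := by push_cast; ring
    rw [hcast] at h1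
    have e1 : p i₀ = (zi₀:ℝ) := hzi₀2
    have e2 : q j₀ = (zj₀:ℝ) := hzj₀2
    linarith [hgv₀p, hgv₀q]
  · have h2 := hall _ (mins_subset r a (iLo_mem r hC a))
    have h3 : r (iLo r hC a) - a * (iLo r hC a) = gv r hC a :=
      eq_gv_of_mem r hC a (iLo_mem r hC a)
    linarith



end NPaux
end NPauxSection
open Finset NPaux

/-- the Newton polygon of a product is the Minkowski sum of the Newton
polygons: `NF(PQ)` is the infimal convolution of `NF(P)` and `NF(Q)`. -/
theorem stmt1 (v : AddValuation K (WithTop ℤ)) (P Q : K[X]) (hP : P ≠ 0) (hQ : Q ≠ 0)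
    (x : ℝ) (hx : x ∈ Set.Icc (0 : ℝ) (((P * Q).natDegree : ℝ))) :
    NF v (P * Q) x =
      sInf {y : EReal | ∃ x₁ x₂ : ℝ, 0 ≤ x₁ ∧ x₁ ≤ (P.natDegree : ℝ) ∧
        0 ≤ x₂ ∧ x₂ ≤ (Q.natDegree : ℝ) ∧ x₁ + x₂ = x ∧
        y = NF v P x₁ + NF v Q x₂} := by
  obtain ⟨hx0, hxn⟩ := hx
  have hPQ : P * Q ≠ 0 := mul_ne_zero hP hQ
  have hA : P.support.Nonempty := nonempty_support_iff.mpr hP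
  have hB : Q.support.Nonempty := nonempty_support_iff.mpr hQ
  have hC : (P * Q).support.Nonempty := nonempty_support_iff.mpr hPQ
  have hGauss : ∀ a : ℝ, gv (pf v (P * Q)) hC a =
      gv (pf v P) hA a + gv (pf v Q) hB a := fun a => gv_mul v hP hQ a
  rcases lt_or_ge x ((P.natTrailingDegree : ℝ) + (Q.natTrailingDegree : ℝ)) with hcase | hcase
  · -- both sides are ⊤
    have hLHS : NF v (P * Q) x = ⊤ := by
      apply NF_eq_top v hPQ x
      rw [Polynomial.natTrailingDegree_mul hP hQ]
      push_cast
      exact hcase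
    rw [hLHS, eq_comm, sInf_eq_top]
    rintro y ⟨x₁, x₂, h0, h1, h2, h3, hsum, rfl⟩
    have hor : x₁ < (P.natTrailingDegree : ℝ) ∨ x₂ < (Q.natTrailingDegree : ℝ) := by
      by_contra hcon
      push_neg at hcon
      linarith [hcon.1, hcon.2]
    rcases hor with h | h
    · rw [NF_eq_top v hP x₁ h]
      exact EReal.top_add_of_ne_bot (NF_ne_bot v hQ x₂)
    · rw [NF_eq_top v hQ x₂ h]
      exact EReal.add_top_of_ne_bot (NF_ne_bot v hP x₁)
  · -- main case : use the covering lemma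
    have hminA : (P.support.min' hA : ℝ) = (P.natTrailingDegree : ℝ) := by
      rw [Polynomial.natTrailingDegree_eq_support_min' hP]
    have hminB : (Q.support.min' hB : ℝ) = (Q.natTrailingDegree : ℝ) := by
      rw [Polynomial.natTrailingDegree_eq_support_min' hQ]
    have hmaxA : (P.support.max' hA : ℝ) = (P.natDegree : ℝ) := by
      rw [Polynomial.natDegree_eq_support_max' hP]
    have hmaxB : (Q.support.max' hB : ℝ) = (Q.natDegree : ℝ) := by
      rw [Polynomial.natDegree_eq_support_max' hQ]
    have hx1 : ((P.support.min' hA : ℝ) + (Q.support.min' hB : ℝ)) ≤ x := by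
      rw [hminA, hminB]; exact hcase
    have hx2 : x ≤ ((P.support.max' hA : ℝ) + (Q.support.max' hB : ℝ)) := by
      rw [hmaxA, hmaxB]
      rw [Polynomial.natDegree_mul hP hQ] at hxn
      push_cast at hxn
      exact hxn
    obtain ⟨a, hcov1, hcov2⟩ := NPaux.covering (pf v P) (pf v Q) hA hB x hx1 hx2
    have hiLoHiA : (iLo (pf v P) hA a : ℝ) ≤ (iHi (pf v P) hA a : ℝ) := by
      exact_mod_cast iLo_le_iHi (pf v P) hA a
    have hiLoHiB : (iLo (pf v Q) hB a : ℝ) ≤ (iHi (pf v Q) hB a : ℝ) := by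
      exact_mod_cast iLo_le_iHi (pf v Q) hB a
    set x₁ : ℝ := max ((iLo (pf v P) hA a : ℝ)) (x - (iHi (pf v Q) hB a : ℝ)) with hx₁def
    set x₂ : ℝ := x - x₁ with hx₂def
    have hl1 : (iLo (pf v P) hA a : ℝ) ≤ x₁ := le_max_left _ _
    have hl2 : x₁ ≤ (iHi (pf v P) hA a : ℝ) :=
      max_le hiLoHiA (by linarith)
    have hl3 : (iLo (pf v Q) hB a : ℝ) ≤ x₂ := by
      have : x₁ ≤ x - (iLo (pf v Q) hB a : ℝ) :=
        max_le (by linarith) (by linarith)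
      simp only [hx₂def]
      linarith
    have hl4 : x₂ ≤ (iHi (pf v Q) hB a : ℝ) := by
      have := le_max_right ((iLo (pf v P) hA a : ℝ)) (x - (iHi (pf v Q) hB a : ℝ))
      simp only [hx₂def]
      linarith
    apply le_antisymm
    · apply le_sInf
      rintro y ⟨x₁', x₂', h1', h2', h3', h4', hsum', rfl⟩
      rw [NF_eq v (P * Q)]
      apply sSup_le
      rintro z ⟨a', b', hab', rfl⟩
      have hb' : b' ≤ gv (pf v (P * Q)) hC a' := by
        have h1 := hab' _ (mins_subset _ a' (iLo_mem (pf v (P * Q)) hC a'))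
        have h2 := eq_gv_of_mem (pf v (P * Q)) hC a' (iLo_mem (pf v (P * Q)) hC a')
        linarith
      calc ((a' * x + b' : ℝ) : EReal)
          ≤ (((a' * x₁' + gv (pf v P) hA a') + (a' * x₂' + gv (pf v Q) hB a') : ℝ) : EReal) := by
            rw [EReal.coe_le_coe_iff]
            have hg := hGauss a'
            have hax : a' * x = a' * x₁' + a' * x₂' := by rw [← hsum']; ring
            linarith
        _ = ((a' * x₁' + gv (pf v P) hA a' : ℝ) : EReal) +
            ((a' * x₂' + gv (pf v Q) hB a' : ℝ) : EReal) := by rw [← EReal.coe_add]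
        _ ≤ NF v P x₁' + NF v Q x₂' :=
            add_le_add (le_NF v hP a' x₁') (le_NF v hQ a' x₂')
    · have hx₁nn : (0:ℝ) ≤ x₁ := le_trans (Nat.cast_nonneg _) hl1
      have hx₁deg : x₁ ≤ (P.natDegree : ℝ) := by
        refine le_trans hl2 ?_
        rw [← hmaxA]
        exact_mod_cast Finset.le_max' _ _ (mins_subset (pf v P) a (iHi_mem (pf v P) hA a))
      have hx₂nn : (0:ℝ) ≤ x₂ := le_trans (Nat.cast_nonneg _) hl3
      have hx₂deg : x₂ ≤ (Q.natDegree : ℝ) := by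
        refine le_trans hl4 ?_
        rw [← hmaxB]
        exact_mod_cast Finset.le_max' _ _ (mins_subset (pf v Q) a (iHi_mem (pf v Q) hB a))
      have hmem : NF v P x₁ + NF v Q x₂ ∈ {y : EReal | ∃ x₁ x₂ : ℝ, 0 ≤ x₁ ∧
          x₁ ≤ (P.natDegree : ℝ) ∧ 0 ≤ x₂ ∧ x₂ ≤ (Q.natDegree : ℝ) ∧ x₁ + x₂ = x ∧
          y = NF v P x₁ + NF v Q x₂} :=
        ⟨x₁, x₂, hx₁nn, hx₁deg, hx₂nn, hx₂deg, by simp only [hx₂def]; ring, rfl⟩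
      refine le_trans (sInf_le hmem) ?_
      calc NF v P x₁ + NF v Q x₂
          ≤ ((a * x₁ + gv (pf v P) hA a : ℝ) : EReal) +
            ((a * x₂ + gv (pf v Q) hB a : ℝ) : EReal) :=
            add_le_add (NF_le_of_between v hP a x₁ hl1 hl2)
              (NF_le_of_between v hQ a x₂ hl3 hl4)
        _ = ((a * x + (gv (pf v P) hA a + gv (pf v Q) hB a) : ℝ) : EReal) := by
            rw [← EReal.coe_add]
            congr 1
            have hxx : x₁ + x₂ = x := by simp only [hx₂def]; ring
            linear_combination a * hxx
        _ = ((a * x + gv (pf v (P * Q)) hC a : ℝ) : EReal) := by rw [hGauss a]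
        _ ≤ NF v (P * Q) x := le_NF v hPQ a x
end
end

section
/- Let B be a monic polynomial of degree d over a complete discrete valuation field K, and let λ = NF(B)(d) − NF(B)(d−1) = −NF(B)(d−1) (the last slope of its Newton polygon). For each n ≥ d, let R_n = X^n mod B. Then for all x in [0, d−1], NF(R_n)(x) ≥ NF(B)(x) − λ(n − d). -/
open Polynomial Set

noncomputable section

variable {K : Type*} [Field K]

lemma toE_coe (m : ℤ) : toE (m : WithTop ℤ) = ((m : ℝ) : EReal) := rfl
lemma toE_top : toE (⊤ : WithTop ℤ) = ⊤ := rfl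
lemma toE_ne_bot (s : WithTop ℤ) : toE s ≠ ⊥ := by
  induction s using WithTop.recTopCoe with
  | top => simp [toE_top]
  | coe m => simp [toE_coe]
lemma toE_mono : Monotone toE := by
  intro s t h
  induction t using WithTop.recTopCoe with
  | top => simp [toE_top]
  | coe m =>
    induction s using WithTop.recTopCoe with
    | top => simp at h
    | coe k =>
      rw [toE_coe, toE_coe, EReal.coe_le_coe_iff]
      exact_mod_cast WithTop.coe_le_coe.mp h
lemma toE_add (s t : WithTop ℤ) : toE (s + t) = toE s + toE t := by
  induction s using WithTop.recTopCoe with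
  | top => rw [toE_top, top_add, toE_top, EReal.top_add_of_ne_bot (toE_ne_bot t)]
  | coe k =>
    induction t using WithTop.recTopCoe with
    | top => rw [toE_top, add_top, toE_top, EReal.add_top_of_ne_bot (toE_ne_bot _)]
    | coe m =>
      rw [← WithTop.coe_add, toE_coe, toE_coe, toE_coe]
      norm_cast
lemma toE_min (s t : WithTop ℤ) : toE (min s t) = min (toE s) (toE t) := by
  rcases le_total s t with h | h
  · rw [min_eq_left h, min_eq_left (toE_mono h)]
  · rw [min_eq_right h, min_eq_right (toE_mono h)]

lemma toE_v_sub (v : AddValuation K (WithTop ℤ)) {x y : K} {t : EReal}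
    (hx : t ≤ toE (v x)) (hy : t ≤ toE (v y)) : t ≤ toE (v (x - y)) :=
  le_trans (le_min hx hy) (by rw [← toE_min]; exact toE_mono (v.map_sub x y))

lemma toE_v_zero (v : AddValuation K (WithTop ℤ)) : toE (v 0) = ⊤ := by
  rw [v.map_zero, toE_top]

section main
variable (v : AddValuation K (WithTop ℤ)) (B : K[X]) (hB : B.Monic)
  (d : ℕ) (hd : B.natDegree = d) (hd1 : 1 ≤ d) (lam : ℝ)

include hB hd hd1

lemma mod_base : X ^ d %ₘ B = X ^ d - B := by
  have hdeg : (X ^ d - B).degree < B.degree := by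
    have h1 : (X ^ d : K[X]).degree = (d : WithBot ℕ) := degree_X_pow d
    have h2 : B.degree = (d : WithBot ℕ) := by
      rw [degree_eq_natDegree hB.ne_zero, hd]
    have := degree_sub_lt (h1.trans h2.symm) (pow_ne_zero _ X_ne_zero) (by
      simp [leadingCoeff_X_pow, hB.leadingCoeff])
    rwa [h1, ← h2] at this
  have key : X ^ d = B * 1 + (X ^ d - B) := by ring
  rw [key, add_modByMonic, (modByMonic_eq_self_iff hB).2 hdeg]
  simp [Polynomial.modByMonic_eq_zero_iff_dvd hB]

lemma mod_coeff_zero (n : ℕ) {i : ℕ} (hi : d ≤ i) : (X ^ n %ₘ B).coeff i = 0 := by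
  apply coeff_eq_zero_of_degree_lt
  have := degree_modByMonic_lt (X ^ n) hB
  rw [degree_eq_natDegree hB.ne_zero, hd] at this
  exact lt_of_lt_of_le this (by exact_mod_cast hi)

lemma mod_rec (n : ℕ) :
    X ^ (n + 1) %ₘ B =
      X * (X ^ n %ₘ B) - C ((X ^ n %ₘ B).coeff (d - 1)) * B := by
  set R := X ^ n %ₘ B with hR
  set c := R.coeff (d - 1) with hc
  have hcoeffd : B.coeff d = 1 := by rw [← hd]; exact hB.coeff_natDegree
  have hBdeg : B.degree = (d : WithBot ℕ) := by rw [degree_eq_natDegree hB.ne_zero, hd]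
  have hBcoeff : ∀ m : ℕ, d < m → B.coeff m = 0 := by
    intro m hm
    exact coeff_eq_zero_of_degree_lt (hBdeg ▸ (by exact_mod_cast hm))
  have hdeg : (X * R - C c * B).degree < B.degree := by
    rw [hBdeg, degree_lt_iff_coeff_zero]
    intro m hm
    have hm' : d ≤ m := by exact_mod_cast hm
    have hm1 : 1 ≤ m := le_trans hd1 hm'
    obtain ⟨j, rfl⟩ : ∃ j, m = j + 1 := ⟨m - 1, (Nat.succ_pred_eq_of_pos hm1).symm⟩
    rw [coeff_sub, coeff_X_mul, coeff_C_mul]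
    rcases eq_or_lt_of_le hm' with he | hlt
    · have hj : j = d - 1 := by omega
      have hd' : d - 1 + 1 = d := by omega
      rw [hj, ← hc, hd', hcoeffd]
      ring
    · rw [mod_coeff_zero B hB d hd hd1 n (by omega : d ≤ j), hBcoeff _ hlt]
      ring
  have hsplit : X ^ (n + 1) = B * (X * (X ^ n /ₘ B) + C c) + (X * R - C c * B) := by
    have h0 : R + B * (X ^ n /ₘ B) = X ^ n := modByMonic_add_div _ B
    calc X ^ (n+1) = X * (R + B * (X ^ n /ₘ B)) := by rw [h0]; ring
    _ = B * (X * (X ^ n /ₘ B) + C c) + (X * R - C c * B) := by ring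
  rw [hsplit, add_modByMonic, (modByMonic_eq_self_iff hB).2 hdeg,
    Polynomial.modByMonic_eq_zero_iff_dvd hB |>.2 (dvd_mul_right _ _), zero_add]

lemma L1 (hA : ∀ i : ℕ, i ≤ d → ((lam * ((i:ℝ) - (d:ℝ)) : ℝ) : EReal) ≤ toE (v (B.coeff i))) :
    ∀ n, d ≤ n → ∀ i : ℕ,
      ((lam * ((i:ℝ) - (n:ℝ)) : ℝ) : EReal) ≤ toE (v ((X ^ n %ₘ B).coeff i)) := by
  intro n hn
  induction n, hn using Nat.le_induction with
  | base =>
    intro i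
    by_cases hi : d ≤ i
    · rw [mod_coeff_zero B hB d hd hd1 d hi, toE_v_zero]; exact le_top
    · push_neg at hi
      rw [mod_base B hB d hd hd1, coeff_sub, coeff_X_pow, if_neg (by omega : ¬ i = d), zero_sub,
        v.map_neg]
      exact hA i (le_of_lt hi)
  | succ n hn IH =>
    intro i
    by_cases hi : d ≤ i
    · rw [mod_coeff_zero B hB d hd hd1 (n+1) hi, toE_v_zero]; exact le_top
    · push_neg at hi
      rw [mod_rec B hB d hd hd1 n, coeff_sub]
      apply toE_v_sub
      · -- (X * R).coeff i
        rcases i with _ | j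
        · simp only [mul_coeff_zero, coeff_X_zero, zero_mul, toE_v_zero]
          exact le_top
        · rw [coeff_X_mul]
          refine le_trans ?_ (IH j)
          rw [EReal.coe_le_coe_iff]
          push_cast
          nlinarith [IH j]
      · rw [coeff_C_mul, v.map_mul, toE_add]
        have h1 := IH (d - 1)
        have h2 := hA i (le_of_lt hi)
        calc ((lam * ((i:ℝ) - ((n+1:ℕ):ℝ)) : ℝ) : EReal)
            = ((lam * (((d-1:ℕ):ℝ) - (n:ℝ)) + lam * ((i:ℝ) - (d:ℝ)) : ℝ) : EReal) := by
              rw [EReal.coe_eq_coe_iff]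
              have : ((d-1:ℕ):ℝ) = (d:ℝ) - 1 := by
                rw [Nat.cast_sub hd1]; norm_num
              rw [this]; push_cast; ring
          _ = ((lam * (((d-1:ℕ):ℝ) - (n:ℝ)) : ℝ) : EReal) + ((lam * ((i:ℝ) - (d:ℝ)) : ℝ) : EReal) := by
              rw [← EReal.coe_add]
          _ ≤ _ := add_le_add h1 h2
end main

section main2
variable (v : AddValuation K (WithTop ℤ)) (B : K[X]) (hB : B.Monic)
  (d : ℕ) (hd : B.natDegree = d) (hd1 : 1 ≤ d) (lam : ℝ)

include hB hd hd1

lemma L2 (hA : ∀ i : ℕ, i ≤ d → ((lam * ((i:ℝ) - (d:ℝ)) : ℝ) : EReal) ≤ toE (v (B.coeff i)))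
    (a b : ℝ)
    (hab : ∀ i : ℕ, i ≤ d → ((a * (i:ℝ) + b : ℝ) : EReal) ≤ toE (v (B.coeff i)))
    (ha : a ≤ lam) :
    ∀ n, d ≤ n → ∀ i : ℕ,
      ((a * (i:ℝ) + b - lam * ((n:ℝ) - (d:ℝ)) : ℝ) : EReal) ≤ toE (v ((X ^ n %ₘ B).coeff i)) := by
  intro n hn
  induction n, hn using Nat.le_induction with
  | base =>
    intro i
    by_cases hi : d ≤ i
    · rw [mod_coeff_zero B hB d hd hd1 d hi, toE_v_zero]; exact le_top
    · push_neg at hi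
      rw [mod_base B hB d hd hd1, coeff_sub, coeff_X_pow, if_neg (by omega : ¬ i = d), zero_sub,
        v.map_neg]
      have : a * (i:ℝ) + b - lam * ((d:ℝ) - (d:ℝ)) = a * (i:ℝ) + b := by ring
      rw [this]
      exact hab i (le_of_lt hi)
  | succ n hn IH =>
    intro i
    by_cases hi : d ≤ i
    · rw [mod_coeff_zero B hB d hd hd1 (n+1) hi, toE_v_zero]; exact le_top
    · push_neg at hi
      rw [mod_rec B hB d hd hd1 n, coeff_sub]
      apply toE_v_sub
      · rcases i with _ | j
        · simp only [mul_coeff_zero, coeff_X_zero, zero_mul, toE_v_zero]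
          exact le_top
        · rw [coeff_X_mul]
          refine le_trans ?_ (IH j)
          rw [EReal.coe_le_coe_iff]
          push_cast
          nlinarith [hn]
      · rw [coeff_C_mul, v.map_mul, toE_add]
        have h1 := L1 v B hB d hd hd1 lam hA n hn (d - 1)
        have h2 := hab i (le_of_lt hi)
        calc ((a * (i:ℝ) + b - lam * (((n+1:ℕ):ℝ) - (d:ℝ)) : ℝ) : EReal)
            = ((lam * (((d-1:ℕ):ℝ) - (n:ℝ)) + (a * (i:ℝ) + b) : ℝ) : EReal) := by
              rw [EReal.coe_eq_coe_iff]
              have hcast : ((d-1:ℕ):ℝ) = (d:ℝ) - 1 := by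
                rw [Nat.cast_sub hd1]; norm_num
              rw [hcast]; push_cast; ring
          _ = ((lam * (((d-1:ℕ):ℝ) - (n:ℝ)) : ℝ) : EReal) + ((a * (i:ℝ) + b : ℝ) : EReal) := by
              rw [← EReal.coe_add]
          _ ≤ _ := add_le_add h1 h2
end main2

/-- for `B` monic of degree `d` with last slope `λ = −NF(B)(d−1)`,
the remainder `Rₙ = Xⁿ mod B` satisfies `NF(Rₙ)(x) ≥ NF(B)(x) − λ(n−d)` on `[0,d−1]`. -/
theorem stmt2 (v : AddValuation K (WithTop ℤ)) (B : K[X]) (hB : B.Monic)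
    (d : ℕ) (hd : B.natDegree = d)
    (lam : ℝ) (hlam : NF v B ((d : ℝ) - 1) = ((-lam : ℝ) : EReal))
    (n : ℕ) (hn : d ≤ n)
    (x : ℝ) (hx : x ∈ Set.Icc (0 : ℝ) ((d : ℝ) - 1)) :
    NF v B x + ((-(lam * ((n : ℝ) - (d : ℝ))) : ℝ) : EReal) ≤ NF v ((X ^ n) % B) x := by
  obtain ⟨hx0, hx1⟩ := hx
  -- d ≥ 1
  have hd1 : 1 ≤ d := by
    rcases Nat.eq_zero_or_pos d with h | h
    · subst h; norm_num at hx1; linarith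
    · exact h
  -- % = %ₘ
  have hmod : (X ^ n : K[X]) % B = X ^ n %ₘ B := by
    rw [Polynomial.mod_def, hB.leadingCoeff, inv_one, map_one, mul_one]
  rw [hmod]
  -- coeff d of B
  have hcoeffd : B.coeff d = 1 := by rw [← hd]; exact hB.coeff_natDegree
  have hvd : toE (v (B.coeff d)) = ((0 : ℝ) : EReal) := by
    rw [hcoeffd, v.map_one]
    exact_mod_cast (toE_coe 0)
  -- upper bound at d-1 for feasible lines
  have hub : ∀ a b : ℝ,
      (∀ i : ℕ, i ≤ B.natDegree → ((a * (i : ℝ) + b : ℝ) : EReal) ≤ toE (v (B.coeff i))) →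
      a * ((d:ℝ) - 1) + b ≤ -lam := by
    intro a b hfeas
    have hmem : ((a * ((d:ℝ) - 1) + b : ℝ) : EReal) ∈
        {y : EReal | ∃ a' b' : ℝ,
          (∀ i : ℕ, i ≤ B.natDegree → ((a' * (i : ℝ) + b' : ℝ) : EReal) ≤ toE (v (B.coeff i))) ∧
          y = ((a' * ((d:ℝ) - 1) + b' : ℝ) : EReal)} := ⟨a, b, hfeas, rfl⟩
    have := le_sSup hmem
    rw [show sSup _ = NF v B ((d:ℝ) - 1) from rfl, hlam] at this
    exact EReal.coe_le_coe_iff.1 this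
  -- the key convexity consequence: last-slope bound on coefficients
  have hA : ∀ i : ℕ, i ≤ d → ((lam * ((i:ℝ) - (d:ℝ)) : ℝ) : EReal) ≤ toE (v (B.coeff i)) := by
    intro i hi
    rcases eq_or_lt_of_le hi with he | hlt
    · subst he
      rw [hvd, EReal.coe_le_coe_iff]
      norm_num
    · by_contra hcon
      push_neg at hcon
      have hne : v (B.coeff i) ≠ ⊤ := by
        intro h
        rw [h, toE_top] at hcon
        exact not_top_lt hcon
      obtain ⟨m, hm⟩ := WithTop.ne_top_iff_exists.1 hne
      set r : ℝ := (m : ℝ) with hrdef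
      have hr : r < lam * ((i:ℝ) - (d:ℝ)) := by
        rw [← hm, toE_coe, EReal.coe_lt_coe_iff] at hcon
        exact hcon
      have hdi : (0:ℝ) < (d:ℝ) - (i:ℝ) := by
        have : (i:ℝ) < (d:ℝ) := by exact_mod_cast hlt
        linarith
      set t : ℝ := 1 / ((d:ℝ) - (i:ℝ)) with htdef
      have ht : 0 < t := by positivity
      have htd : t * ((d:ℝ) - (i:ℝ)) = 1 := by
        rw [htdef]; field_simp
      have hsup : NF v B ((d:ℝ) - 1) ≤ ((t * r : ℝ) : EReal) := by
        apply sSup_le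
        rintro y ⟨a, b, hfeas, rfl⟩
        rw [EReal.coe_le_coe_iff]
        have h1 : a * (i:ℝ) + b ≤ r := by
          have h := hfeas i (by omega)
          rw [← hm, toE_coe] at h
          exact EReal.coe_le_coe_iff.1 h
        have h2 : a * (d:ℝ) + b ≤ 0 := by
          have h := hfeas d (le_of_eq hd.symm)
          rw [hvd] at h
          exact EReal.coe_le_coe_iff.1 h
        have e1 : t * (a * (i:ℝ) + b) ≤ t * r := mul_le_mul_of_nonneg_left h1 ht.le
        have e2 : (1 - t) * (a * (d:ℝ) + b) ≤ 0 := by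
          apply mul_nonpos_of_nonneg_of_nonpos _ h2
          have h3 : 1 ≤ (d:ℝ) - (i:ℝ) := by
            have : (i:ℝ) + 1 ≤ (d:ℝ) := by exact_mod_cast hlt
            linarith
          have : t ≤ 1 := by
            rw [htdef]
            rw [div_le_one hdi]
            exact h3
          linarith
        have e3 : a * (t * ((d:ℝ) - (i:ℝ))) = a * 1 := by rw [htd]
        nlinarith [e1, e2, e3]
      rw [hlam] at hsup
      have hfin : -lam ≤ t * r := EReal.coe_le_coe_iff.1 hsup
      have h6 : t * ((i:ℝ) - (d:ℝ)) = -1 := by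
        have := htd
        nlinarith [htd]
      have h5 : t * (lam * ((i:ℝ) - (d:ℝ))) = -lam := by
        calc t * (lam * ((i:ℝ) - (d:ℝ))) = lam * (t * ((i:ℝ) - (d:ℝ))) := by ring
          _ = -lam := by rw [h6]; ring
      linarith [mul_lt_mul_of_pos_left hr ht, hfin, h5]
  -- the key pointwise bound
  set c : ℝ := -(lam * ((n:ℝ) - (d:ℝ))) with hcdef
  set T : EReal := NF v (X ^ n %ₘ B) x with hTdef
  have key : ∀ y ∈ {y : EReal | ∃ a b : ℝ,
      (∀ i : ℕ, i ≤ B.natDegree → ((a * (i : ℝ) + b : ℝ) : EReal) ≤ toE (v (B.coeff i))) ∧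
      y = ((a * x + b : ℝ) : EReal)}, y + (c : EReal) ≤ T := by
    rintro y ⟨a, b, hfeas, rfl⟩
    -- replace the line by one of slope ≤ lam without decreasing the value at x
    obtain ⟨a₂, b₂, h2feas, ha₂, hval⟩ :
        ∃ a₂ b₂ : ℝ, (∀ i : ℕ, i ≤ d → ((a₂ * (i:ℝ) + b₂ : ℝ) : EReal) ≤ toE (v (B.coeff i))) ∧
          a₂ ≤ lam ∧ a * x + b ≤ a₂ * x + b₂ := by
      by_cases hca : a ≤ lam
      · exact ⟨a, b, fun i hi => hfeas i (by omega), hca, le_refl _⟩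
      · push_neg at hca
        refine ⟨lam, a * ((d:ℝ) - 1) + b - lam * ((d:ℝ) - 1), ?_, le_refl _, ?_⟩
        · intro i hi
          refine le_trans ?_ (hA i hi)
          rw [EReal.coe_le_coe_iff]
          have := hub a b hfeas
          nlinarith
        · nlinarith [hub a b hfeas]
    have hL2 := L2 v B hB d hd hd1 lam hA a₂ b₂ h2feas ha₂ n hn
    have hmem : ((a₂ * x + (b₂ - lam * ((n:ℝ) - (d:ℝ))) : ℝ) : EReal) ∈
        {y : EReal | ∃ a' b' : ℝ,
          (∀ i : ℕ, i ≤ (X ^ n %ₘ B).natDegree →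
            ((a' * (i : ℝ) + b' : ℝ) : EReal) ≤ toE (v ((X ^ n %ₘ B).coeff i))) ∧
          y = ((a' * x + b' : ℝ) : EReal)} := by
      refine ⟨a₂, b₂ - lam * ((n:ℝ) - (d:ℝ)), fun i _ => ?_, rfl⟩
      have := hL2 i
      refine le_trans (le_of_eq ?_) this
      rw [EReal.coe_eq_coe_iff]
      ring
    have hle : ((a₂ * x + (b₂ - lam * ((n:ℝ) - (d:ℝ))) : ℝ) : EReal) ≤ T := le_sSup hmem
    calc ((a * x + b : ℝ) : EReal) + (c : EReal)
        = ((a * x + b + c : ℝ) : EReal) := by rw [← EReal.coe_add]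
      _ ≤ ((a₂ * x + (b₂ - lam * ((n:ℝ) - (d:ℝ))) : ℝ) : EReal) := by
          rw [EReal.coe_le_coe_iff, hcdef]
          linarith
      _ ≤ T := hle
  have h1 : NF v B x ≤ T - (c : EReal) := by
    apply sSup_le
    intro y hy
    exact (EReal.le_sub_iff_add_le (Or.inl (EReal.coe_ne_bot c))
      (Or.inl (EReal.coe_ne_top c))).2 (key y hy)
  calc NF v B x + (c : EReal) ≤ (T - (c : EReal)) + (c : EReal) := add_le_add_left h1 _
    _ = T := EReal.sub_add_cancel
end
end

section
/- Let P be a polynomial over K whose Newton polygon has an extremal point at abscissa d with left slope λ₀, normalized so NF(P)(d) = λ₀ d, and let φ(x) = NF(P)(x) for x ≤ d, φ(x) = λ₀ x for x > d. Let A be a polynomial of degree d with NF(A) = NF(P) restricted to [0,d]. Then for any polynomial Q: (a) b(Q mod A) ≥ b(Q) for b ∈ {b_φ, b₀, b₁}; and (b) b₀(Q div A) ≥ b_φ(Q), where b_φ(Q) = min_x (NF(Q)(x) − φ(x)), b₀(Q) = min_x (NF(Q)(x) − λ₀ x), b₁(Q) = min_x (NF(Q)(x) − λ₁ x), λ₁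 being the right slope of NP(P) at d. -/
open Polynomial Set

noncomputable section

variable {K : Type*} [Field K]

namespace Stmt7

@[simp] lemma toE_top : toE ⊤ = ⊤ := rfl
@[simp] lemma toE_coe (n : ℤ) : toE (n : ℤ) = ((n : ℝ) : EReal) := rfl

lemma toE_ne_bot (t : WithTop ℤ) : toE t ≠ ⊥ := by
  cases t with
  | top => simp [toE]
  | coe n => exact EReal.coe_ne_bot _

lemma toE_mono : Monotone toE := by
  intro a b h
  cases a with
  | top => cases b with
    | top => exact le_rfl
    | coe n => simp at h
  | coe m => cases b with
    | top => exact le_top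
    | coe n =>
      have : (m : ℤ) ≤ n := by exact_mod_cast h
      exact EReal.coe_le_coe_iff.2 (by exact_mod_cast this)

lemma toE_add (a b : WithTop ℤ) : toE (a + b) = toE a + toE b := by
  cases a with
  | top =>
    show toE ⊤ = ⊤ + toE b
    rw [toE_top, EReal.top_add_of_ne_bot (toE_ne_bot b)]
  | coe m => cases b with
    | top =>
      show toE ⊤ = toE (m : ℤ) + ⊤
      rw [toE_top, EReal.add_top_of_ne_bot (toE_ne_bot ((m : ℤ) : WithTop ℤ))]
    | coe n =>
      have : ((m : ℤ) : WithTop ℤ) + (n : ℤ) = ((m + n : ℤ) : WithTop ℤ) := by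
        exact_mod_cast rfl
      rw [this]
      show ((((m + n : ℤ)) : ℝ) : EReal) = (((m:ℤ):ℝ) : EReal) + (((n:ℤ):ℝ) : EReal)
      rw [← EReal.coe_add]
      norm_num


variable (v : AddValuation K (WithTop ℤ))

lemma le_NF (Q : K[X]) (a b : ℝ)
    (h : ∀ i : ℕ, i ≤ Q.natDegree → ((a * (i : ℝ) + b : ℝ) : EReal) ≤ toE (v (Q.coeff i)))
    (x : ℝ) : ((a * x + b : ℝ) : EReal) ≤ NF v Q x :=
  le_sSup ⟨a, b, h, rfl⟩

lemma NF_le_coeff (Q : K[X]) {i : ℕ} (hi : i ≤ Q.natDegree) :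
    NF v Q (i : ℝ) ≤ toE (v (Q.coeff i)) := by
  apply sSup_le
  rintro y ⟨a, b, hab, rfl⟩
  exact hab i hi

lemma exists_lower (Q : K[X]) :
    ∃ m : ℝ, ∀ i : ℕ, i ≤ Q.natDegree → (m : EReal) ≤ toE (v (Q.coeff i)) := by
  classical
  set f : ℕ → ℝ := fun i => (toE (v (Q.coeff i))).toReal with hf
  refine ⟨(Finset.range (Q.natDegree + 1)).inf' ⟨0, by simp⟩ f, fun i hi => ?_⟩
  have h1 : (Finset.range (Q.natDegree + 1)).inf' ⟨0, by simp⟩ f ≤ f i :=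
    Finset.inf'_le f (Finset.mem_range.2 (Nat.lt_succ_of_le hi))
  refine le_trans (EReal.coe_le_coe_iff.2 h1) ?_
  rcases eq_or_ne (toE (v (Q.coeff i))) ⊤ with h | h
  · rw [h]; exact le_top
  · rw [hf]
    simp only
    rw [EReal.coe_toReal h (toE_ne_bot _)]

lemma exists_real_le_NF (Q : K[X]) (x : ℝ) : ∃ r : ℝ, ((r : ℝ) : EReal) ≤ NF v Q x := by
  obtain ⟨m, hm⟩ := exists_lower v Q
  refine ⟨m, ?_⟩
  have := le_NF v Q 0 m (fun i hi => by simpa using hm i hi) x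
  simpa using this

lemma NF_ne_bot (Q : K[X]) (x : ℝ) : NF v Q x ≠ ⊥ := by
  obtain ⟨r, hr⟩ := exists_real_le_NF v Q x
  intro h
  rw [h, le_bot_iff] at hr
  exact EReal.coe_ne_bot r hr

lemma v_ne_top {x : K} (hx : x ≠ 0) : v x ≠ ⊤ := by
  intro h
  have h1 : v (x * x⁻¹) = v x + v x⁻¹ := AddValuation.map_mul v _ _
  rw [mul_inv_cancel₀ hx, AddValuation.map_one, h, top_add] at h1
  exact (by simp : ((0 : WithTop ℤ)) ≠ ⊤) h1

lemma le_of_forall_real_lt {a b : EReal} (h : ∀ c : ℝ, (c : EReal) < a → (c : EReal) ≤ b) :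
    a ≤ b := by
  by_contra hab
  push_neg at hab
  obtain ⟨c, hbc, hca⟩ := EReal.exists_between_coe_real hab
  exact absurd (h c hca) (not_le.2 hbc)

lemma add_real_le_iff {a c : EReal} {r : ℝ} : a + (r : EReal) ≤ c ↔ a ≤ c - (r : EReal) :=
  (EReal.le_sub_iff_add_le (Or.inl (EReal.coe_ne_bot r)) (Or.inl (EReal.coe_ne_top r))).symm


lemma NF_zero_poly (x : ℝ) : NF v (0 : K[X]) x = ⊤ := by
  refine eq_top_iff.2 (le_of_forall_real_lt fun c _ => ?_)
  have := le_NF v (0 : K[X]) 0 c (fun i hi => by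
    simp only [Polynomial.coeff_zero, AddValuation.map_zero, toE_top]; exact le_top) x
  simpa using this

section KF

variable {P : K[X]} {d : ℕ} {lam0 : ℝ}
variable (hnorm : NF v P (d : ℝ) = ((lam0 * d : ℝ) : EReal))
variable (hleft : NF v P ((d : ℝ) - 1) = ((lam0 * ((d : ℝ) - 1) : ℝ) : EReal))

include hnorm hleft in
lemma KF1 : ∀ j : ℕ, j ≤ d → ((lam0 * j : ℝ) : EReal) ≤ NF v P (j : ℝ) := by
  intro j hj
  rcases eq_or_lt_of_le hj with rfl | hjd
  · exact le_of_eq hnorm.symm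
  · apply le_of_forall_real_lt
    intro c hc
    have hc' : c < lam0 * j := EReal.coe_lt_coe_iff.1 hc
    have hKpos : (0 : ℝ) < (d : ℝ) - j := by
      have : (j : ℝ) < d := by exact_mod_cast hjd
      linarith
    set ε : ℝ := (lam0 * j - c) / ((d : ℝ) - j) with hε
    have hεpos : 0 < ε := div_pos (by linarith) hKpos
    -- pick a minorant almost achieving NF P (d-1)
    have hlt2 : ((lam0 * ((d : ℝ) - 1) - ε : ℝ) : EReal) < NF v P ((d : ℝ) - 1) := by
      rw [hleft]
      exact_mod_cast (by linarith : lam0 * ((d : ℝ) - 1) - ε < lam0 * ((d : ℝ) - 1))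
    obtain ⟨y, hy_mem, hy_gt⟩ := lt_sSup_iff.1 hlt2
    obtain ⟨a, b, hab, rfl⟩ := hy_mem
    have hu : lam0 * ((d : ℝ) - 1) - ε < a * ((d : ℝ) - 1) + b := by
      exact_mod_cast hy_gt
    have hvd : a * (d : ℝ) + b ≤ lam0 * d := by
      have := le_NF v P a b hab (d : ℝ)
      rw [hnorm] at this
      exact_mod_cast this
    have ha : a ≤ lam0 + ε := by nlinarith
    have hval : c ≤ a * (j : ℝ) + b := by
      have hj1 : (j : ℝ) ≤ (d : ℝ) - 1 := by
        have : (j : ℕ) + 1 ≤ d := hjd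
        have := (by exact_mod_cast this : (j : ℝ) + 1 ≤ (d : ℝ))
        linarith
      have hεK : ε * ((d : ℝ) - j) = lam0 * j - c := by
        rw [hε]; exact div_mul_cancel₀ _ hKpos.ne'
      nlinarith
    calc ((c : ℝ) : EReal) ≤ ((a * (j : ℝ) + b : ℝ) : EReal) := EReal.coe_le_coe_iff.2 hval
      _ ≤ NF v P (j : ℝ) := le_NF v P a b hab _

include hnorm hleft in
lemma KF2 : ∀ j k : ℕ, j + k ≤ d →
    NF v P ((j + k : ℕ) : ℝ) ≤ NF v P (j : ℝ) + ((lam0 * k : ℝ) : EReal) := by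
  intro j k hjk
  apply sSup_le
  rintro y ⟨a, b, hab, rfl⟩
  by_cases ha : a ≤ lam0
  · have h1 : ((a * (j : ℝ) + b : ℝ) : EReal) ≤ NF v P (j : ℝ) := le_NF v P a b hab _
    have h2 : a * ((j + k : ℕ) : ℝ) + b = (a * j + b) + a * k := by push_cast; ring
    rw [h2, EReal.coe_add]
    refine add_le_add h1 (EReal.coe_le_coe_iff.2 ?_)
    have : (0 : ℝ) ≤ k := by positivity
    nlinarith
  · push_neg at ha
    rcases eq_or_lt_of_le hjk with heq | hlt'
    · -- j + k = d
      have h1 : ((a * ((j + k : ℕ) : ℝ) + b : ℝ) : EReal) ≤ NF v P ((j + k : ℕ) : ℝ) :=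
        le_NF v P a b hab _
      have hcast : ((j + k : ℕ) : ℝ) = (d : ℝ) := by exact_mod_cast congrArg (Nat.cast : ℕ → ℝ) heq
      rw [hcast, hnorm] at h1
      rw [hcast]
      refine le_trans h1 ?_
      have hd : (lam0 * d : ℝ) = lam0 * j + lam0 * k := by
        rw [← hcast]; push_cast; ring
      rw [hd, EReal.coe_add]
      exact add_le_add_left (KF1 v hnorm hleft j (by omega)) _
    · -- j + k < d
      have h2 : ((a * ((d : ℝ) - 1) + b : ℝ) : EReal) ≤ NF v P ((d : ℝ) - 1) := le_NF v P a b hab _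
      rw [hleft] at h2
      have h2' : a * ((d : ℝ) - 1) + b ≤ lam0 * ((d : ℝ) - 1) := by exact_mod_cast h2
      have hjk1 : ((j + k : ℕ) : ℝ) ≤ (d : ℝ) - 1 := by
        have : (j + k : ℕ) + 1 ≤ d := hlt'
        have := (by exact_mod_cast this : ((j + k : ℕ) : ℝ) + 1 ≤ (d : ℝ))
        linarith
      have hreal : a * ((j + k : ℕ) : ℝ) + b ≤ lam0 * ((j + k : ℕ) : ℝ) := by nlinarith
      have : ((a * ((j + k : ℕ) : ℝ) + b : ℝ) : EReal) ≤ ((lam0 * j + lam0 * k : ℝ) : EReal) := by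
        refine EReal.coe_le_coe_iff.2 (le_trans hreal (le_of_eq ?_))
        push_cast; ring
      refine le_trans this ?_
      rw [EReal.coe_add]
      exact add_le_add_left (KF1 v hnorm hleft j (by omega)) _

end KF

lemma coeff_nd_le_NF (T : K[X]) (hT : T ≠ 0) :
    toE (v (T.coeff T.natDegree)) ≤ NF v T (T.natDegree : ℝ) := by
  set n := T.natDegree with hn
  have hTn : T.coeff n ≠ 0 := by
    rw [hn]
    exact Polynomial.leadingCoeff_ne_zero.2 hT
  obtain ⟨g, hg⟩ : ∃ g : ℤ, v (T.coeff n) = (g : WithTop ℤ) := by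
    rcases h : v (T.coeff n) with _ | g
    · exact absurd h (v_ne_top v hTn)
    · exact ⟨g, rfl⟩
  obtain ⟨m, hm⟩ := exists_lower v T
  set a : ℝ := max 0 ((g : ℝ) - m) with hadef
  have ha0 : 0 ≤ a := le_max_left _ _
  have ham : (g : ℝ) - m ≤ a := le_max_right _ _
  have hmin : ∀ i : ℕ, i ≤ T.natDegree →
      ((a * (i : ℝ) + ((g : ℝ) - a * n) : ℝ) : EReal) ≤ toE (v (T.coeff i)) := by
    intro i hi
    rcases eq_or_lt_of_le hi with rfl | hilt
    · rw [← hn, hg, toE_coe]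
      exact EReal.coe_le_coe_iff.2 (by ring_nf; exact le_rfl)
    · refine le_trans ?_ (hm i hi)
      refine EReal.coe_le_coe_iff.2 ?_
      have h1 : (i : ℝ) + 1 ≤ (n : ℝ) := by exact_mod_cast hilt
      nlinarith
  have := le_NF v T a ((g : ℝ) - a * n) hmin (n : ℝ)
  rw [hg, toE_coe]
  refine le_trans (le_of_eq ?_) this
  norm_num


lemma div_mod_eq {A : K[X]} (hA : A ≠ 0) (Q B R : K[X]) (hQ : Q = A * B + R)
    (hdeg : R.degree < A.degree) : Q / A = B ∧ Q % A = R := by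
  have h1 : A * (Q / A) + Q % A = Q := EuclideanDomain.div_add_mod Q A
  have hmod : (Q % A).degree < A.degree := EuclideanDomain.mod_lt _ hA
  have hBQ : B = Q / A := by
    by_contra hne
    have h2 : A * (B - Q / A) = Q % A - R := by
      have h2' : A * (Q / A) + Q % A = A * B + R := by rw [h1, hQ]
      linear_combination (-1 : K[X]) * h2'
    have hd1 : (Q % A - R).degree < A.degree :=
      lt_of_le_of_lt (Polynomial.degree_sub_le _ _) (max_lt hmod hdeg)
    have hd2 : A.degree ≤ (A * (B - Q / A)).degree :=
      Polynomial.degree_le_mul_left A (sub_ne_zero.2 hne)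
    rw [h2] at hd2
    exact absurd (lt_of_le_of_lt hd2 hd1) (lt_irrefl _)
  refine ⟨hBQ.symm, ?_⟩
  have h3 : Q % A = Q - A * (Q / A) := eq_sub_of_add_eq' h1
  rw [h3, ← hBQ, hQ]; ring


lemma add_move_real {x y : EReal} (r : ℝ) (h : x + (r : EReal) ≤ y) :
    x ≤ y + ((-r : ℝ) : EReal) := by
  have h2 := add_le_add_left h ((-r : ℝ) : EReal)
  have e : x + (r : EReal) + ((-r : ℝ) : EReal) = x := by
    rw [add_assoc, ← EReal.coe_add]
    norm_num
  rwa [e] at h2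

lemma main_ind (A : K[X]) (d : ℕ) (hAd : A.natDegree = d) (lam0 : ℝ)
    (μ ψ : ℕ → EReal)
    (hA1 : ∀ j : ℕ, j ≤ d → μ j ≤ toE (v (A.coeff j)))
    (hA2 : toE (v (A.coeff d)) = ((lam0 * d : ℝ) : EReal))
    (hP1 : ∀ j k : ℕ, j ≤ d → ψ (j + k) + ((lam0 * d : ℝ) : EReal) ≤ ψ (d + k) + μ j)
    (hP2 : ∀ k : ℕ, ∃ s : ℝ, ψ (d + k) = (s : EReal) ∧ lam0 * ((d : ℝ) + (k : ℝ)) ≤ s)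
    (c : ℝ) :
    ∀ n : ℕ, ∀ Q : K[X], Q.natDegree ≤ n →
      (∀ i : ℕ, ψ i + (c : EReal) ≤ toE (v (Q.coeff i))) →
      (∀ i : ℕ, ψ i + (c : EReal) ≤ toE (v ((Q % A).coeff i))) ∧
      (∀ i : ℕ, ((lam0 * i : ℝ) : EReal) + (c : EReal) ≤ toE (v ((Q / A).coeff i))) := by
  have hA0 : A ≠ 0 := by
    intro h
    rw [h] at hA2
    simp only [Polynomial.coeff_zero, AddValuation.map_zero, toE_top] at hA2
    exact (EReal.coe_ne_top _) hA2.symm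
  have hAdeg : A.degree = (d : WithBot ℕ) := by rw [Polynomial.degree_eq_natDegree hA0, hAd]
  have hAdne : A.coeff d ≠ 0 := by
    rw [← hAd]; exact Polynomial.leadingCoeff_ne_zero.2 hA0
  obtain ⟨gA, hgA⟩ : ∃ g : ℤ, v (A.coeff d) = (g : WithTop ℤ) := by
    rcases h : v (A.coeff d) with _ | g
    · exact absurd h (v_ne_top v hAdne)
    · exact ⟨g, rfl⟩
  have hgA_real : (gA : ℝ) = lam0 * d := by
    rw [hgA, toE_coe] at hA2
    exact_mod_cast hA2
  intro n
  induction n using Nat.strong_induction_on with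
  | _ n IH =>
  intro Q hQn H
  by_cases hlt : Q.degree < A.degree
  · have hmod : Q % A = Q := (Polynomial.mod_eq_self_iff hA0).2 hlt
    have hdiv : Q / A = 0 := (Polynomial.div_eq_zero_iff hA0).2 hlt
    rw [hmod, hdiv]
    refine ⟨H, fun i => ?_⟩
    simp only [Polynomial.coeff_zero, AddValuation.map_zero, toE_top]
    exact le_top
  · push_neg at hlt
    have hQ0 : Q ≠ 0 := by
      intro h
      rw [h, Polynomial.degree_zero, hAdeg] at hlt
      exact absurd (le_bot_iff.mp hlt) (by simp)
    have hdm : d ≤ Q.natDegree := by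
      rw [← hAd]; exact Polynomial.natDegree_le_natDegree hlt
    set m := Q.natDegree with hm
    set k := m - d with hk
    have hmk : m = d + k := by omega
    have hQmne : Q.coeff m ≠ 0 := Polynomial.leadingCoeff_ne_zero.2 hQ0
    set c' : K := Q.coeff m * (A.coeff d)⁻¹ with hc'
    have hc'ne : c' ≠ 0 := mul_ne_zero hQmne (inv_ne_zero hAdne)
    obtain ⟨gQ, hgQ⟩ : ∃ g : ℤ, v (Q.coeff m) = (g : WithTop ℤ) := by
      rcases h : v (Q.coeff m) with _ | g
      · exact absurd h (v_ne_top v hQmne)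
      · exact ⟨g, rfl⟩
    have hvAinv : v (A.coeff d)⁻¹ = ((-gA : ℤ) : WithTop ℤ) := by
      have h1 : v (A.coeff d) + v (A.coeff d)⁻¹ = 0 := by
        rw [← AddValuation.map_mul, mul_inv_cancel₀ hAdne, AddValuation.map_one]
      rw [hgA] at h1
      rcases h : v (A.coeff d)⁻¹ with _ | y
      · exact absurd h (v_ne_top v (inv_ne_zero hAdne))
      · rw [h] at h1
        show (y : WithTop ℤ) = ((-gA : ℤ) : WithTop ℤ)
        have h2 : ((gA + y : ℤ) : WithTop ℤ) = ((0 : ℤ) : WithTop ℤ) := by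
          push_cast
          exact h1
        have h3 : gA + y = 0 := by exact_mod_cast h2
        have h4 : y = -gA := by omega
        rw [h4]
    have htoEc' : toE (v c') = (((gQ : ℝ) - lam0 * d : ℝ) : EReal) := by
      rw [hc', AddValuation.map_mul, hgQ, hvAinv, toE_add, toE_coe, toE_coe, ← EReal.coe_add]
      rw [EReal.coe_eq_coe_iff]
      push_cast
      rw [hgA_real]
      ring
    set D : K[X] := C c' * A * X ^ k with hD
    set Q' : K[X] := Q - D with hQ'
    have hDcoeff : ∀ i : ℕ, D.coeff i = if k ≤ i then c' * A.coeff (i - k) else 0 := by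
      intro i
      rw [hD, Polynomial.coeff_mul_X_pow']
      split_ifs with h
      · rw [Polynomial.coeff_C_mul]
      · rfl
    have hDbound : ∀ i : ℕ, ψ i + (c : EReal) ≤ toE (v (D.coeff i)) := by
      intro i
      rw [hDcoeff i]
      split_ifs with hki
      swap
      · simp only [AddValuation.map_zero, toE_top]; exact le_top
      by_cases hjd : i - k ≤ d
      swap
      · push_neg at hjd
        have : A.coeff (i - k) = 0 := Polynomial.coeff_eq_zero_of_natDegree_lt (by omega)
        simp only [this, mul_zero, AddValuation.map_zero, toE_top]
        exact le_top
      set j := i - k with hj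
      have hij : i = j + k := by omega
      rw [AddValuation.map_mul, toE_add, htoEc']
      have e1 : ψ (d + k) + (c : EReal) ≤ ((gQ : ℝ) : EReal) := by
        have e1' := H m
        rw [hgQ, toE_coe] at e1'
        rwa [← hmk]
      have e2 : μ j ≤ toE (v (A.coeff j)) := hA1 j hjd
      have e3 := hP1 j k hjd
      rw [hij]
      have key : ψ (j + k) + (c : EReal) + ((lam0 * d : ℝ) : EReal) ≤
          ((gQ : ℝ) : EReal) + toE (v (A.coeff j)) := by
        calc ψ (j + k) + (c : EReal) + ((lam0 * d : ℝ) : EReal)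
            = (ψ (j + k) + ((lam0 * d : ℝ) : EReal)) + (c : EReal) := by abel
          _ ≤ (ψ (d + k) + μ j) + (c : EReal) := add_le_add_left e3 _
          _ = (ψ (d + k) + (c : EReal)) + μ j := by abel
          _ ≤ ((gQ : ℝ) : EReal) + toE (v (A.coeff j)) := add_le_add e1 e2
      have hmv := add_move_real (lam0 * d) key
      refine le_trans hmv (le_of_eq ?_)
      calc (((gQ : ℝ) : EReal) + toE (v (A.coeff j))) + ((-(lam0 * d) : ℝ) : EReal)
          = (((gQ : ℝ) : EReal) + ((-(lam0 * d) : ℝ) : EReal)) + toE (v (A.coeff j)) := by abel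
        _ = (((gQ : ℝ) - lam0 * d : ℝ) : EReal) + toE (v (A.coeff j)) := by
            rw [← EReal.coe_add]; ring_nf
    have H' : ∀ i : ℕ, ψ i + (c : EReal) ≤ toE (v (Q'.coeff i)) := by
      intro i
      have hsub : min (v (Q.coeff i)) (v (D.coeff i)) ≤ v (Q.coeff i - D.coeff i) :=
        AddValuation.map_sub v _ _
      have hQ'c : Q'.coeff i = Q.coeff i - D.coeff i := by
        rw [hQ', Polynomial.coeff_sub]
      rw [hQ'c]
      calc ψ i + (c : EReal) ≤ min (toE (v (Q.coeff i))) (toE (v (D.coeff i))) :=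
            le_min (H i) (hDbound i)
        _ = toE (min (v (Q.coeff i)) (v (D.coeff i))) := (toE_mono.map_min).symm
        _ ≤ toE (v (Q.coeff i - D.coeff i)) := toE_mono hsub
    have hQ'm : Q'.coeff m = 0 := by
      rw [hQ', Polynomial.coeff_sub, hDcoeff m, if_pos (by omega : k ≤ m)]
      have hmkd : m - k = d := by omega
      rw [hmkd, hc']
      field_simp
      simp
    have hQ'deg : Q'.natDegree ≤ m := by
      refine le_trans (Polynomial.natDegree_sub_le _ _) (max_le le_rfl ?_)
      calc D.natDegree ≤ (C c' * A).natDegree + (X ^ k : K[X]).natDegree :=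
            Polynomial.natDegree_mul_le
        _ ≤ (C c').natDegree + A.natDegree + k := by
            rw [Polynomial.natDegree_X_pow]
            exact add_le_add_left Polynomial.natDegree_mul_le _
        _ = d + k := by rw [Polynomial.natDegree_C, hAd]; omega
        _ = m := hmk.symm
    have key' : (∀ i : ℕ, ψ i + (c : EReal) ≤ toE (v ((Q' % A).coeff i))) ∧
        (∀ i : ℕ, ((lam0 * i : ℝ) : EReal) + (c : EReal) ≤ toE (v ((Q' / A).coeff i))) := by
      by_cases hQ'0 : Q' = 0
      · rw [hQ'0]
        constructor <;> intro i <;>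
          simp only [EuclideanDomain.zero_mod, EuclideanDomain.zero_div,
            Polynomial.coeff_zero, AddValuation.map_zero, toE_top] <;> exact le_top
      · have hQ'lt : Q'.natDegree < m := by
          rcases lt_or_eq_of_le hQ'deg with h | h
          · exact h
          · exfalso
            have := Polynomial.leadingCoeff_ne_zero.2 hQ'0
            rw [Polynomial.leadingCoeff, h] at this
            exact this hQ'm
        exact IH Q'.natDegree (lt_of_lt_of_le hQ'lt hQn) Q' le_rfl H'
    have hQeq : Q = A * (Q' / A + C c' * X ^ k) + Q' % A := by
      have h1 : A * (Q' / A) + Q' % A = Q' := EuclideanDomain.div_add_mod Q' A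
      have h2 : Q = Q' + D := by rw [hQ']; ring
      calc Q = Q' + D := h2
        _ = (A * (Q' / A) + Q' % A) + D := by rw [h1]
        _ = A * (Q' / A + C c' * X ^ k) + Q' % A := by rw [hD]; ring
    obtain ⟨hdivQ, hmodQ⟩ :=
      div_mod_eq hA0 Q (Q' / A + C c' * X ^ k) (Q' % A) hQeq (EuclideanDomain.mod_lt _ hA0)
    constructor
    · rw [hmodQ]; exact key'.1
    · intro i
      rw [hdivQ, Polynomial.coeff_add]
      have hb2 : ((lam0 * i : ℝ) : EReal) + (c : EReal) ≤ toE (v ((C c' * X ^ k).coeff i)) := by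
        rw [Polynomial.coeff_C_mul, Polynomial.coeff_X_pow]
        split_ifs with hik
        · rw [mul_one, htoEc']
          obtain ⟨s, hs1, hs2⟩ := hP2 k
          have e1 : ψ (d + k) + (c : EReal) ≤ ((gQ : ℝ) : EReal) := by
            have e1' := H m
            rw [hgQ, toE_coe] at e1'
            rwa [← hmk]
          rw [hs1, ← EReal.coe_add] at e1
          have e1r : s + c ≤ (gQ : ℝ) := EReal.coe_le_coe_iff.1 e1
          rw [← EReal.coe_add, EReal.coe_le_coe_iff]
          have : (m : ℝ) = (d : ℝ) + (k : ℝ) := by exact_mod_cast hmk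
          rw [hik]
          nlinarith
        · simp only [mul_zero, AddValuation.map_zero, toE_top]; exact le_top
      have hsub : min (v ((Q' / A).coeff i)) (v ((C c' * X ^ k).coeff i)) ≤
          v ((Q' / A).coeff i + (C c' * X ^ k).coeff i) := AddValuation.map_add v _ _
      calc ((lam0 * i : ℝ) : EReal) + (c : EReal)
          ≤ min (toE (v ((Q' / A).coeff i))) (toE (v ((C c' * X ^ k).coeff i))) :=
            le_min (key'.2 i) hb2
        _ = toE (min (v ((Q' / A).coeff i)) (v ((C c' * X ^ k).coeff i))) :=
            (toE_mono.map_min).symm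
        _ ≤ _ := toE_mono hsub


lemma getH (Q : K[X]) (φ : ℝ → EReal) (ψ : ℕ → EReal)
    (hmatch : ∀ i : ℕ, i ≤ Q.natDegree → ψ i = φ (i : ℝ))
    (c : ℝ) (hc : (c : EReal) < bE v φ Q) :
    ∀ i : ℕ, ψ i + (c : EReal) ≤ toE (v (Q.coeff i)) := by
  intro i
  by_cases hi : i ≤ Q.natDegree
  swap
  · have h0 : Q.coeff i = 0 := Polynomial.coeff_eq_zero_of_natDegree_lt (by omega)
    rw [h0]
    simp only [AddValuation.map_zero, toE_top]
    exact le_top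
  · have hmem : bE v φ Q ≤ NF v Q (i : ℝ) - φ (i : ℝ) :=
      sInf_le ⟨(i : ℝ), by positivity, by exact_mod_cast hi, rfl⟩
    have hch : (c : EReal) < NF v Q (i : ℝ) - φ (i : ℝ) := lt_of_lt_of_le hc hmem
    have hsubmono : NF v Q (i : ℝ) - φ (i : ℝ) ≤ toE (v (Q.coeff i)) - φ (i : ℝ) := by
      rw [sub_eq_add_neg, sub_eq_add_neg]
      exact add_le_add_left (NF_le_coeff v Q hi) _
    have hch2 : (c : EReal) < toE (v (Q.coeff i)) - φ (i : ℝ) := lt_of_lt_of_le hch hsubmono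
    rw [hmatch i hi]
    by_cases hbot : φ (i : ℝ) = ⊥
    · rw [hbot, EReal.bot_add]; exact bot_le
    by_cases htop : φ (i : ℝ) = ⊤
    · rw [htop, EReal.sub_top] at hch2
      exact absurd hch2 (not_lt_bot)
    · set s := (φ (i : ℝ)).toReal with hs
      have hsr : (s : EReal) = φ (i : ℝ) := EReal.coe_toReal htop hbot
      rw [← hsr] at hch2 ⊢
      have h3 := (EReal.lt_sub_iff_add_lt (Or.inl (EReal.coe_ne_bot s))
        (Or.inl (EReal.coe_ne_top s))).1 hch2
      refine le_of_lt ?_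
      calc (s : EReal) + (c : EReal) = ((s + c : ℝ) : EReal) := (EReal.coe_add _ _).symm
        _ = ((c + s : ℝ) : EReal) := by rw [add_comm]
        _ = (c : EReal) + (s : EReal) := EReal.coe_add _ _
        _ < _ := h3

lemma assemble_affine (A Q T : K[X]) (φ : ℝ → EReal) (ψ : ℕ → EReal) (lam' : ℝ)
    (hmatch : ∀ i : ℕ, i ≤ Q.natDegree → ψ i = φ (i : ℝ))
    (hcoef : ∀ c : ℝ, (∀ i : ℕ, ψ i + (c : EReal) ≤ toE (v (Q.coeff i))) →
      (∀ i : ℕ, ((lam' * i : ℝ) : EReal) + (c : EReal) ≤ toE (v (T.coeff i)))) :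
    bE v φ Q ≤ bE v (fun x => ((lam' * x : ℝ) : EReal)) T := by
  apply le_sInf
  rintro y ⟨x, hx0, hxn, rfl⟩
  apply le_of_forall_real_lt
  intro c hc
  have H := getH v Q φ ψ hmatch c hc
  have C := hcoef c H
  have hminor : ((lam' * x + c : ℝ) : EReal) ≤ NF v T x := by
    refine le_NF v T lam' c (fun i hi => ?_) x
    refine le_trans (le_of_eq ?_) (C i)
    rw [← EReal.coe_add]
  have h2 : (c : EReal) + ((lam' * x : ℝ) : EReal) ≤ NF v T x := by
    refine le_trans (le_of_eq ?_) hminor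
    rw [← EReal.coe_add, EReal.coe_eq_coe_iff]
    ring
  exact add_real_le_iff.1 h2

def phif (v : AddValuation K (WithTop ℤ)) (P : K[X]) (d : ℕ) (lam0 : ℝ) : ℝ → EReal :=
  fun x => if x ≤ (d : ℝ) then NF v P x else ((lam0 * x : ℝ) : EReal)

def psiphi (v : AddValuation K (WithTop ℤ)) (P : K[X]) (d : ℕ) (lam0 : ℝ) : ℕ → EReal :=
  fun i => phif v P d lam0 (i : ℝ)

lemma assemble_phi (P A Q : K[X]) (d : ℕ) (hAd : A.natDegree = d) (hA0 : A ≠ 0) (lam0 : ℝ)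
    (hcoef : ∀ c : ℝ, (∀ i : ℕ, psiphi v P d lam0 i + (c : EReal) ≤ toE (v (Q.coeff i))) →
      (∀ i : ℕ, psiphi v P d lam0 i + (c : EReal) ≤ toE (v ((Q % A).coeff i)))) :
    bE v (phif v P d lam0) Q ≤ bE v (phif v P d lam0) (Q % A) := by
  have hTd : (Q % A).natDegree ≤ d := by
    by_cases h : Q % A = 0
    · rw [h, Polynomial.natDegree_zero]; exact Nat.zero_le _
    · have h2 : (Q % A).natDegree < A.natDegree :=
        Polynomial.natDegree_lt_natDegree h (EuclideanDomain.mod_lt _ hA0)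
      omega
  apply le_sInf
  rintro y ⟨x, hx0, hxT, rfl⟩
  have hxd : x ≤ (d : ℝ) := le_trans hxT (by exact_mod_cast hTd)
  have hxQ : x ≤ (Q.natDegree : ℝ) := by
    by_cases hcase : Q.degree < A.degree
    · rw [(Polynomial.mod_eq_self_iff hA0).2 hcase] at hxT
      exact hxT
    · push_neg at hcase
      have h3 : d ≤ Q.natDegree := by
        rw [← hAd]; exact Polynomial.natDegree_le_natDegree hcase
      exact le_trans hxd (by exact_mod_cast h3)
  have hφx : phif v P d lam0 x = NF v P x := by
    unfold phif; rw [if_pos hxd]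
  rw [hφx]
  rcases eq_or_ne (NF v P x) ⊤ with htop | hne
  · have hble : bE v (phif v P d lam0) Q ≤ NF v Q x - phif v P d lam0 x :=
      sInf_le ⟨x, hx0, hxQ, rfl⟩
    rw [hφx, htop, EReal.sub_top] at hble
    exact le_trans hble bot_le
  · apply le_of_forall_real_lt
    intro c hc
    have hmatch : ∀ i : ℕ, i ≤ Q.natDegree → psiphi v P d lam0 i = phif v P d lam0 (i : ℝ) :=
      fun i _ => rfl
    have H := getH v Q _ _ hmatch c hc
    have C := hcoef c H
    have hbot : NF v P x ≠ ⊥ := NF_ne_bot v P x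
    set r := (NF v P x).toReal with hr
    have hrx : (r : EReal) = NF v P x := EReal.coe_toReal hne hbot
    have hsup : NF v P x ≤ NF v (Q % A) x - (c : EReal) := by
      apply sSup_le
      rintro z ⟨a, b, hab, rfl⟩
      rw [← add_real_le_iff]
      have hminor : ((a * x + (b + c) : ℝ) : EReal) ≤ NF v (Q % A) x := by
        refine le_NF v (Q % A) a (b + c) (fun i hi => ?_) x
        have h1 : ((a * (i : ℝ) + b : ℝ) : EReal) ≤ psiphi v P d lam0 i := by
          have hid : (i : ℝ) ≤ (d : ℝ) := by
            have : i ≤ d := le_trans hi hTd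
            exact_mod_cast this
          unfold psiphi phif
          rw [if_pos hid]
          exact le_NF v P a b hab (i : ℝ)
        calc ((a * (i : ℝ) + (b + c) : ℝ) : EReal)
            = ((a * (i : ℝ) + b : ℝ) : EReal) + (c : EReal) := by
              rw [← EReal.coe_add, EReal.coe_eq_coe_iff]; ring
          _ ≤ psiphi v P d lam0 i + (c : EReal) := add_le_add_left h1 _
          _ ≤ toE (v ((Q % A).coeff i)) := C i
      refine le_trans (le_of_eq ?_) hminor
      rw [← EReal.coe_add, EReal.coe_eq_coe_iff]
      ring
    rw [← hrx] at hsup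
    have h2 : (r : EReal) + (c : EReal) ≤ NF v (Q % A) x := add_real_le_iff.2 hsup
    rw [← hrx]
    refine add_real_le_iff.1 ?_
    refine le_trans (le_of_eq ?_) h2
    rw [← EReal.coe_add, ← EReal.coe_add, EReal.coe_eq_coe_iff]
    ring


section Psi

variable {P : K[X]} {d : ℕ} {lam0 : ℝ}
variable (hnorm : NF v P (d : ℝ) = ((lam0 * d : ℝ) : EReal))
variable (hleft : NF v P ((d : ℝ) - 1) = ((lam0 * ((d : ℝ) - 1) : ℝ) : EReal))

include hnorm in
lemma psiphi_dk : ∀ kk : ℕ,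
    psiphi v P d lam0 (d + kk) = ((lam0 * ((d + kk : ℕ) : ℝ) : ℝ) : EReal) := by
  intro kk
  rcases Nat.eq_zero_or_pos kk with h | h
  · subst h
    unfold psiphi phif
    rw [if_pos (by push_cast; linarith : (((d + 0 : ℕ) : ℝ)) ≤ (d : ℝ))]
    rw [show (((d + 0 : ℕ) : ℝ)) = (d : ℝ) by push_cast; ring]
    exact hnorm
  · unfold psiphi phif
    rw [if_neg (by
      push_cast
      rw [not_le]
      have h1 : (1 : ℝ) ≤ (kk : ℝ) := by exact_mod_cast h
      linarith)]

include hnorm hleft in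
lemma hP1_phi : ∀ j kk : ℕ, j ≤ d →
    psiphi v P d lam0 (j + kk) + ((lam0 * d : ℝ) : EReal) ≤
      psiphi v P d lam0 (d + kk) + NF v P (j : ℝ) := by
  intro j kk hj
  rw [psiphi_dk v hnorm kk]
  by_cases hcase : j + kk ≤ d
  · have h1 : psiphi v P d lam0 (j + kk) = NF v P ((j + kk : ℕ) : ℝ) := by
      unfold psiphi phif
      rw [if_pos (by exact_mod_cast hcase)]
    rw [h1]
    have h2 := KF2 v hnorm hleft j kk hcase
    calc NF v P ((j + kk : ℕ) : ℝ) + ((lam0 * d : ℝ) : EReal)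
        ≤ (NF v P (j : ℝ) + ((lam0 * kk : ℝ) : EReal)) + ((lam0 * d : ℝ) : EReal) :=
          add_le_add_left h2 _
      _ = ((lam0 * ((d + kk : ℕ) : ℝ) : ℝ) : EReal) + NF v P (j : ℝ) := by
          rw [add_assoc, ← EReal.coe_add]
          rw [show ((lam0 * kk + lam0 * d : ℝ)) = (lam0 * ((d + kk : ℕ) : ℝ)) by push_cast; ring]
          exact add_comm _ _
  · push_neg at hcase
    have h1 : psiphi v P d lam0 (j + kk) = ((lam0 * ((j + kk : ℕ) : ℝ) : ℝ) : EReal) := by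
      unfold psiphi phif
      rw [if_neg (by
        rw [not_le]
        have hc' : (d : ℝ) < (j : ℝ) + (kk : ℝ) := by exact_mod_cast hcase
        push_cast
        linarith)]
    rw [h1]
    have h2 := KF1 v hnorm hleft j hj
    calc ((lam0 * ((j + kk : ℕ) : ℝ) : ℝ) : EReal) + ((lam0 * d : ℝ) : EReal)
        = ((lam0 * ((d + kk : ℕ) : ℝ) : ℝ) : EReal) + ((lam0 * (j : ℝ) : ℝ) : EReal) := by
          rw [← EReal.coe_add, ← EReal.coe_add, EReal.coe_eq_coe_iff]
          push_cast; ring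
      _ ≤ ((lam0 * ((d + kk : ℕ) : ℝ) : ℝ) : EReal) + NF v P (j : ℝ) := add_le_add_right h2 _

include hnorm hleft in
lemma hP1_lam (lam : ℝ) (hll : lam0 ≤ lam) : ∀ j kk : ℕ, j ≤ d →
    ((lam * ((j + kk : ℕ) : ℝ) : ℝ) : EReal) + ((lam0 * d : ℝ) : EReal) ≤
      ((lam * ((d + kk : ℕ) : ℝ) : ℝ) : EReal) + NF v P (j : ℝ) := by
  intro j kk hj
  have h2 := KF1 v hnorm hleft j hj
  have hreal : lam * ((j + kk : ℕ) : ℝ) + lam0 * d ≤ lam * ((d + kk : ℕ) : ℝ) + lam0 * j := by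
    have hjd : (j : ℝ) ≤ (d : ℝ) := by exact_mod_cast hj
    push_cast
    nlinarith
  calc ((lam * ((j + kk : ℕ) : ℝ) : ℝ) : EReal) + ((lam0 * d : ℝ) : EReal)
      = ((lam * ((j + kk : ℕ) : ℝ) + lam0 * d : ℝ) : EReal) := (EReal.coe_add _ _).symm
    _ ≤ ((lam * ((d + kk : ℕ) : ℝ) + lam0 * (j : ℝ) : ℝ) : EReal) := EReal.coe_le_coe_iff.2 hreal
    _ = ((lam * ((d + kk : ℕ) : ℝ) : ℝ) : EReal) + ((lam0 * (j : ℝ) : ℝ) : EReal) :=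
        EReal.coe_add _ _
    _ ≤ ((lam * ((d + kk : ℕ) : ℝ) : ℝ) : EReal) + NF v P (j : ℝ) := add_le_add_right h2 _

include hnorm in
lemma hP2_phi : ∀ kk : ℕ, ∃ s : ℝ,
    psiphi v P d lam0 (d + kk) = (s : EReal) ∧ lam0 * ((d : ℝ) + (kk : ℝ)) ≤ s := by
  intro kk
  refine ⟨lam0 * ((d + kk : ℕ) : ℝ), psiphi_dk v hnorm kk, le_of_eq ?_⟩
  push_cast; ring

lemma hP2_lam (lam : ℝ) (hll : lam0 ≤ lam) : ∀ kk : ℕ,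
    (((lam * ((d + kk : ℕ) : ℝ) : ℝ) : EReal) = ((lam * ((d + kk : ℕ) : ℝ) : ℝ) : EReal))
      ∧ lam0 * ((d : ℝ) + (kk : ℝ)) ≤ lam * ((d + kk : ℕ) : ℝ) := by
  intro kk
  refine ⟨rfl, ?_⟩
  push_cast
  have h1 : (0:ℝ) ≤ (d : ℝ) + (kk : ℝ) := by positivity
  nlinarith

end Psi

end Stmt7

/-- for `A` of degree `d` with `NF(A) = NF(P)|[0,d]`:
(a) `b(Q mod A) ≥ b(Q)` for `b ∈ {b_φ, b₀, b₁}`; (b) `b₀(Q div A) ≥ b_φ(Q)`. -/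
theorem stmt7 (v : AddValuation K (WithTop ℤ)) (P : K[X]) (hP : P ≠ 0)
    (d : ℕ) (hdn : d ≤ P.natDegree)
    (lam0 lam1 : ℝ) (hlt : lam0 < lam1)
    (hnorm : NF v P (d : ℝ) = ((lam0 * d : ℝ) : EReal))
    (hleft : NF v P ((d : ℝ) - 1) = ((lam0 * ((d : ℝ) - 1) : ℝ) : EReal))
    (hright : NF v P ((d : ℝ) + 1) = ((lam0 * d + lam1 : ℝ) : EReal))
    (A : K[X]) (hAd : A.natDegree = d)
    (hNFA : ∀ x ∈ Set.Icc (0 : ℝ) (d : ℝ), NF v A x = NF v P x)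
    (Q : K[X]) :
    (bE v (fun x => if x ≤ (d : ℝ) then NF v P x else ((lam0 * x : ℝ) : EReal)) Q
      ≤ bE v (fun x => if x ≤ (d : ℝ) then NF v P x else ((lam0 * x : ℝ) : EReal)) (Q % A)) ∧
    (bE v (fun x => ((lam0 * x : ℝ) : EReal)) Q
      ≤ bE v (fun x => ((lam0 * x : ℝ) : EReal)) (Q % A)) ∧
    (bE v (fun x => ((lam1 * x : ℝ) : EReal)) Q
      ≤ bE v (fun x => ((lam1 * x : ℝ) : EReal)) (Q % A)) ∧
    (bE v (fun x => if x ≤ (d : ℝ) then NF v P x else ((lam0 * x : ℝ) : EReal)) Q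
      ≤ bE v (fun x => ((lam0 * x : ℝ) : EReal)) (Q / A)) := by
  classical
  have hA0 : A ≠ 0 := by
    intro h
    have hd0 : d = 0 := by rw [← hAd, h, Polynomial.natDegree_zero]
    have h0 : NF v A 0 = NF v P 0 := hNFA 0 ⟨le_rfl, by positivity⟩
    rw [h, Stmt7.NF_zero_poly] at h0
    rw [hd0, show ((0 : ℕ) : ℝ) = (0 : ℝ) by norm_num] at hnorm
    rw [← h0] at hnorm
    exact (EReal.coe_ne_top _) hnorm.symm
  have hA1 : ∀ j : ℕ, j ≤ d → (fun j : ℕ => NF v P (j : ℝ)) j ≤ toE (v (A.coeff j)) := by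
    intro j hj
    have h1 := Stmt7.NF_le_coeff v A (show j ≤ A.natDegree by omega)
    rwa [hNFA (j : ℝ) ⟨by positivity, by exact_mod_cast hj⟩] at h1
  have hA2 : toE (v (A.coeff d)) = ((lam0 * d : ℝ) : EReal) := by
    refine le_antisymm ?_ ?_
    · have h1 := Stmt7.coeff_nd_le_NF v A hA0
      rw [hAd] at h1
      rwa [hNFA (d : ℝ) ⟨by positivity, le_rfl⟩, hnorm] at h1
    · have h2 := hA1 d le_rfl
      simp only at h2
      rwa [hnorm] at h2
  have hll1 : lam0 ≤ lam1 := le_of_lt hlt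
  refine ⟨?_, ?_, ?_, ?_⟩
  · refine Stmt7.assemble_phi v P A Q d hAd hA0 lam0 (fun c H => ?_)
    exact (Stmt7.main_ind v A d hAd lam0 (fun j : ℕ => NF v P (j : ℝ)) (Stmt7.psiphi v P d lam0)
      hA1 hA2 (Stmt7.hP1_phi v hnorm hleft) (Stmt7.hP2_phi v hnorm)
      c Q.natDegree Q le_rfl H).1
  · refine Stmt7.assemble_affine v A Q (Q % A) _ (fun i : ℕ => ((lam0 * (i : ℝ) : ℝ) : EReal))
      lam0 (fun i _ => rfl) (fun c H => ?_)
    exact (Stmt7.main_ind v A d hAd lam0 (fun j : ℕ => NF v P (j : ℝ))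
      (fun i : ℕ => ((lam0 * (i : ℝ) : ℝ) : EReal))
      hA1 hA2 (Stmt7.hP1_lam v hnorm hleft lam0 le_rfl)
      (fun kk => ⟨lam0 * ((d + kk : ℕ) : ℝ), rfl, (Stmt7.hP2_lam lam0 le_rfl kk).2⟩)
      c Q.natDegree Q le_rfl H).1
  · refine Stmt7.assemble_affine v A Q (Q % A) _ (fun i : ℕ => ((lam1 * (i : ℝ) : ℝ) : EReal))
      lam1 (fun i _ => rfl) (fun c H => ?_)
    exact (Stmt7.main_ind v A d hAd lam0 (fun j : ℕ => NF v P (j : ℝ))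
      (fun i : ℕ => ((lam1 * (i : ℝ) : ℝ) : EReal))
      hA1 hA2 (Stmt7.hP1_lam v hnorm hleft lam1 hll1)
      (fun kk => ⟨lam1 * ((d + kk : ℕ) : ℝ), rfl, (Stmt7.hP2_lam lam1 hll1 kk).2⟩)
      c Q.natDegree Q le_rfl H).1
  · refine Stmt7.assemble_affine v A Q (Q / A) _ (Stmt7.psiphi v P d lam0)
      lam0 (fun i _ => rfl) (fun c H => ?_)
    exact (Stmt7.main_ind v A d hAd lam0 (fun j : ℕ => NF v P (j : ℝ)) (Stmt7.psiphi v P d lam0)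
      hA1 hA2 (Stmt7.hP1_phi v hnorm hleft) (Stmt7.hP2_phi v hnorm)
      c Q.natDegree Q le_rfl H).2
end
end
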